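/- arXiv:0809.2057 — 3 statements merged into one kernel-verified Lean document; each statement's English description precedes it below -/
import Mathlib

section
/- For real numbers α ≥ 0 and β ≥ 0, let M_j = (j!)^α·(ln(j+e))^{β·j}. Then M_0 = 1, M is increasing, logarithmically convex (M_j^2 ≤ M_{j-1}·M_{j+1} for j ≥ 1), and has moderate growth (sup_{j+k≥1} (M_{j+k}/(M_j·M_k))^{1/(j+k)} < ∞); moreover ∑_{j≥0} M_j/((j+1)·M_{j+1}) = ∞ if and only if α = 0 and β ≤ 1. -/
open Set Filter Topology

noncomputable section

/-- The sequence `M_j = (j!)^α·(ln(j+e))^{βj}`. -/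
def Mab (α β : ℝ) : ℕ → ℝ := fun j =>
  (Nat.factorial j : ℝ) ^ α * Real.log ((j:ℝ) + Real.exp 1) ^ (β * (j:ℝ))

lemma aux_one_le_log {x : ℝ} (hx : 0 ≤ x) : 1 ≤ Real.log (x + Real.exp 1) := by
  rw [Real.le_log_iff_exp_le (by positivity)]
  linarith

lemma aux_log_pos {x : ℝ} (hx : 0 ≤ x) : 0 < Real.log (x + Real.exp 1) :=
  lt_of_lt_of_le one_pos (aux_one_le_log hx)

lemma aux_log_diff {x y : ℝ} (hx : 0 ≤ x) (hxy : x ≤ y) :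
    Real.log (y + Real.exp 1) - Real.log (x + Real.exp 1) ≤ (y - x) / (x + Real.exp 1) := by
  have hx0 : (0:ℝ) < x + Real.exp 1 := by positivity
  have hy0 : (0:ℝ) < y + Real.exp 1 := by nlinarith [Real.exp_pos 1]
  rw [← Real.log_div (ne_of_gt hy0) (ne_of_gt hx0)]
  have h := Real.log_le_sub_one_of_pos (div_pos hy0 hx0)
  have : (y + Real.exp 1) / (x + Real.exp 1) - 1 = (y - x) / (x + Real.exp 1) := by
    field_simp
    ring
  linarith [h, this.le]

lemma aux_log_diff_ge {x y : ℝ} (hx : 0 ≤ x) (hxy : x ≤ y) :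
    (y - x) / (y + Real.exp 1) ≤ Real.log (y + Real.exp 1) - Real.log (x + Real.exp 1) := by
  have hx0 : (0:ℝ) < x + Real.exp 1 := by positivity
  have hy0 : (0:ℝ) < y + Real.exp 1 := by nlinarith [Real.exp_pos 1]
  have h := Real.log_le_sub_one_of_pos (div_pos hx0 hy0)
  rw [Real.log_div (ne_of_gt hx0) (ne_of_gt hy0)] at h
  have h2 : (x + Real.exp 1) / (y + Real.exp 1) - 1 = -((y - x) / (y + Real.exp 1)) := by
    field_simp
    ring
  linarith [h, h2.le]

lemma aux_loglog_diff1 {x y : ℝ} (hx : 0 ≤ x) (hxy : x ≤ y) :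
    Real.log (Real.log (y + Real.exp 1)) - Real.log (Real.log (x + Real.exp 1)) ≤
      (Real.log (y + Real.exp 1) - Real.log (x + Real.exp 1)) / Real.log (x + Real.exp 1) := by
  have hLx : 0 < Real.log (x + Real.exp 1) := aux_log_pos hx
  have hLy : 0 < Real.log (y + Real.exp 1) := aux_log_pos (hx.trans hxy)
  rw [← Real.log_div (ne_of_gt hLy) (ne_of_gt hLx)]
  have h := Real.log_le_sub_one_of_pos (div_pos hLy hLx)
  have : Real.log (y + Real.exp 1) / Real.log (x + Real.exp 1) - 1
      = (Real.log (y + Real.exp 1) - Real.log (x + Real.exp 1)) / Real.log (x + Real.exp 1) := by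
    field_simp
  linarith

lemma aux_loglog_diff {x y : ℝ} (hx : 0 ≤ x) (hxy : x ≤ y) :
    Real.log (Real.log (y + Real.exp 1)) - Real.log (Real.log (x + Real.exp 1)) ≤
      (y - x) / (x + Real.exp 1) := by
  have hLx : 1 ≤ Real.log (x + Real.exp 1) := aux_one_le_log hx
  have h1 := aux_loglog_diff1 hx hxy
  have h2 := aux_log_diff hx hxy
  have hnum : 0 ≤ Real.log (y + Real.exp 1) - Real.log (x + Real.exp 1) := by
    have := Real.log_le_log (by positivity) (by linarith : x + Real.exp 1 ≤ y + Real.exp 1)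
    linarith
  have h3 : (Real.log (y + Real.exp 1) - Real.log (x + Real.exp 1)) / Real.log (x + Real.exp 1)
      ≤ Real.log (y + Real.exp 1) - Real.log (x + Real.exp 1) :=
    div_le_self hnum hLx
  linarith

lemma aux_convex :
    ConvexOn ℝ (Ici (0:ℝ)) (fun x => x * Real.log (Real.log (x + Real.exp 1))) := by
  have hint : interior (Ici (0:ℝ)) = Ioi 0 := interior_Ici
  apply convexOn_of_hasDerivWithinAt2_nonneg (convex_Ici 0)
    (f' := fun x => Real.log (Real.log (x + Real.exp 1))
      + x / ((x + Real.exp 1) * Real.log (x + Real.exp 1)))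
    (f'' := fun x => ((x + 2 * Real.exp 1) * Real.log (x + Real.exp 1) - x)
      / ((x + Real.exp 1) * Real.log (x + Real.exp 1)) ^ 2)
  · -- continuity
    intro x hx
    have hx' : (0:ℝ) ≤ x := hx
    have hE : (0:ℝ) < x + Real.exp 1 := by positivity
    have hL : 0 < Real.log (x + Real.exp 1) := aux_log_pos hx'
    have : ContinuousAt (fun x : ℝ => x * Real.log (Real.log (x + Real.exp 1))) x :=
      continuousAt_id.mul
        ((((by fun_prop : ContinuousAt (fun x : ℝ => x + Real.exp 1) x).log
          (ne_of_gt hE)).log (ne_of_gt hL)))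
    exact this.continuousWithinAt
  · -- first derivative
    intro x hx
    rw [hint] at hx ⊢
    have hx' : (0:ℝ) ≤ x := le_of_lt hx
    have hE : (0:ℝ) < x + Real.exp 1 := by positivity
    have hL : 0 < Real.log (x + Real.exp 1) := aux_log_pos hx'
    have h1 : HasDerivAt (fun x : ℝ => x + Real.exp 1) 1 x := by
      simpa using (hasDerivAt_id x).add_const (Real.exp 1)
    have hLd : HasDerivAt (fun x : ℝ => Real.log (x + Real.exp 1)) (1 / (x + Real.exp 1)) x :=
      h1.log (ne_of_gt hE)
    have hAd : HasDerivAt (fun x : ℝ => Real.log (Real.log (x + Real.exp 1)))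
        ((1 / (x + Real.exp 1)) / Real.log (x + Real.exp 1)) x := hLd.log (ne_of_gt hL)
    have hprod := (hasDerivAt_id x).mul hAd
    simp only [id_eq, one_mul] at hprod
    have heq : Real.log (Real.log (x + Real.exp 1))
        + x * ((1 / (x + Real.exp 1)) / Real.log (x + Real.exp 1))
        = Real.log (Real.log (x + Real.exp 1))
          + x / ((x + Real.exp 1) * Real.log (x + Real.exp 1)) := by
      field_simp
    rw [heq] at hprod
    exact hprod.hasDerivWithinAt
  · -- second derivative
    intro x hx
    rw [hint] at hx ⊢
    have hx' : (0:ℝ) ≤ x := le_of_lt hx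
    have hE : (0:ℝ) < x + Real.exp 1 := by positivity
    have hL : 0 < Real.log (x + Real.exp 1) := aux_log_pos hx'
    have hu : (0:ℝ) < (x + Real.exp 1) * Real.log (x + Real.exp 1) := mul_pos hE hL
    have h1 : HasDerivAt (fun x : ℝ => x + Real.exp 1) 1 x := by
      simpa using (hasDerivAt_id x).add_const (Real.exp 1)
    have hLd : HasDerivAt (fun x : ℝ => Real.log (x + Real.exp 1)) (1 / (x + Real.exp 1)) x :=
      h1.log (ne_of_gt hE)
    have hAd : HasDerivAt (fun x : ℝ => Real.log (Real.log (x + Real.exp 1)))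
        ((1 / (x + Real.exp 1)) / Real.log (x + Real.exp 1)) x := hLd.log (ne_of_gt hL)
    have hud : HasDerivAt (fun x : ℝ => (x + Real.exp 1) * Real.log (x + Real.exp 1))
        (1 * Real.log (x + Real.exp 1) + (x + Real.exp 1) * (1 / (x + Real.exp 1))) x :=
      h1.mul hLd
    have hdiv : HasDerivAt (fun x : ℝ => x / ((x + Real.exp 1) * Real.log (x + Real.exp 1)))
        ((1 * ((x + Real.exp 1) * Real.log (x + Real.exp 1))
          - x * (1 * Real.log (x + Real.exp 1) + (x + Real.exp 1) * (1 / (x + Real.exp 1))))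
          / ((x + Real.exp 1) * Real.log (x + Real.exp 1)) ^ 2) x :=
      (hasDerivAt_id x).div hud (ne_of_gt hu)
    simp only [id_eq, one_mul] at hdiv
    have := hAd.add hdiv
    have heq : (1 / (x + Real.exp 1)) / Real.log (x + Real.exp 1)
        + (((x + Real.exp 1) * Real.log (x + Real.exp 1)
          - x * (Real.log (x + Real.exp 1) + (x + Real.exp 1) * (1 / (x + Real.exp 1))))
          / ((x + Real.exp 1) * Real.log (x + Real.exp 1)) ^ 2)
        = ((x + 2 * Real.exp 1) * Real.log (x + Real.exp 1) - x)
          / ((x + Real.exp 1) * Real.log (x + Real.exp 1)) ^ 2 := by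
      field_simp
      ring
    rw [heq] at this
    exact this.hasDerivWithinAt
  · -- nonnegativity
    intro x hx
    rw [hint] at hx
    have hx' : (0:ℝ) ≤ x := le_of_lt hx
    have hL : 1 ≤ Real.log (x + Real.exp 1) := aux_one_le_log hx'
    have hE : (0:ℝ) < Real.exp 1 := Real.exp_pos 1
    apply div_nonneg _ (sq_nonneg _)
    nlinarith

lemma aux_midpoint (j : ℕ) :
    2 * ((j:ℝ)+1) * Real.log (Real.log ((j:ℝ)+1 + Real.exp 1))
      ≤ (j:ℝ) * Real.log (Real.log ((j:ℝ) + Real.exp 1))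
        + ((j:ℝ)+2) * Real.log (Real.log ((j:ℝ)+2 + Real.exp 1)) := by
  have h := aux_convex.2 (mem_Ici.2 (Nat.cast_nonneg j))
    (mem_Ici.2 (by positivity : (0:ℝ) ≤ (j:ℝ)+2))
    (by norm_num : (0:ℝ) ≤ 1/2) (by norm_num : (0:ℝ) ≤ 1/2) (by norm_num)
  simp only [smul_eq_mul] at h
  have hxy : (1/2:ℝ) * (j:ℝ) + (1/2) * ((j:ℝ)+2) = (j:ℝ)+1 := by ring
  rw [hxy] at h
  linarith

lemma Mab_pos (α β : ℝ) (j : ℕ) : 0 < Mab α β j :=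
  mul_pos (Real.rpow_pos_of_pos (by exact_mod_cast j.factorial_pos) _)
    (Real.rpow_pos_of_pos (aux_log_pos j.cast_nonneg) _)

lemma Mab_zero (α β : ℝ) : Mab α β 0 = 1 := by
  simp [Mab]

lemma Mab_mono (α β : ℝ) (hα : 0 ≤ α) (hβ : 0 ≤ β) : Monotone (Mab α β) := by
  apply monotone_nat_of_le_succ
  intro j
  unfold Mab
  have hL1 : 1 ≤ Real.log ((j:ℝ) + Real.exp 1) := aux_one_le_log j.cast_nonneg
  have hL1' : 1 ≤ Real.log (((j:ℕ)+1:ℕ) + Real.exp 1) := by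
    push_cast
    exact aux_one_le_log (by positivity)
  apply mul_le_mul
  · apply Real.rpow_le_rpow (Nat.cast_nonneg _) _ hα
    exact_mod_cast Nat.factorial_le (Nat.le_succ j)
  · calc Real.log ((j:ℝ) + Real.exp 1) ^ (β * (j:ℝ))
        ≤ Real.log (((j+1:ℕ):ℝ) + Real.exp 1) ^ (β * (j:ℝ)) := by
          apply Real.rpow_le_rpow (by linarith) _ (by positivity)
          apply Real.log_le_log (by positivity)
          push_cast; linarith
      _ ≤ Real.log (((j+1:ℕ):ℝ) + Real.exp 1) ^ (β * ((j+1:ℕ):ℝ)) := by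
          apply Real.rpow_le_rpow_of_exponent_le hL1'
          push_cast
          nlinarith
  · positivity
  · positivity

lemma Mab_logconvex (α β : ℝ) (hα : 0 ≤ α) (hβ : 0 ≤ β) (j : ℕ) :
    (Mab α β (j+1)) ^ 2 ≤ Mab α β j * Mab α β (j+2) := by
  unfold Mab
  rw [mul_pow]
  have hF : ((Nat.factorial (j+1) : ℝ) ^ α) ^ 2 ≤ (Nat.factorial j : ℝ) ^ α * (Nat.factorial (j+2) : ℝ) ^ α := by
    rw [sq, ← Real.mul_rpow (Nat.cast_nonneg _) (Nat.cast_nonneg _),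
      ← Real.mul_rpow (Nat.cast_nonneg _) (Nat.cast_nonneg _)]
    apply Real.rpow_le_rpow (by positivity) _ hα
    have : Nat.factorial (j+1) * Nat.factorial (j+1) ≤ Nat.factorial j * Nat.factorial (j+2) := by
      rw [Nat.factorial_succ (j+1), Nat.factorial_succ j]
      have : (j+1) * Nat.factorial (j+1) ≤ (j+2) * Nat.factorial (j+1) :=
        Nat.mul_le_mul_right _ (by omega)
      calc (j+1) * Nat.factorial j * Nat.factorial (j+1)
          = Nat.factorial j * ((j+1) * Nat.factorial (j+1)) := by ring
        _ ≤ Nat.factorial j * ((j+2) * Nat.factorial (j+1)) := Nat.mul_le_mul_left _ this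
    exact_mod_cast this
  have hL : (Real.log (((j+1:ℕ):ℝ) + Real.exp 1) ^ (β * ((j+1:ℕ):ℝ))) ^ 2
      ≤ Real.log ((j:ℝ) + Real.exp 1) ^ (β * (j:ℝ))
        * Real.log (((j+2:ℕ):ℝ) + Real.exp 1) ^ (β * ((j+2:ℕ):ℝ)) := by
    have p0 : (0:ℝ) < Real.log ((j:ℝ) + Real.exp 1) := aux_log_pos j.cast_nonneg
    have p1 : (0:ℝ) < Real.log (((j+1:ℕ):ℝ) + Real.exp 1) := aux_log_pos (Nat.cast_nonneg _)
    have p2 : (0:ℝ) < Real.log (((j+2:ℕ):ℝ) + Real.exp 1) := aux_log_pos (Nat.cast_nonneg _)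
    rw [Real.rpow_def_of_pos p0, Real.rpow_def_of_pos p1, Real.rpow_def_of_pos p2,
      sq, ← Real.exp_add, ← Real.exp_add]
    apply Real.exp_le_exp.2
    have hm := aux_midpoint j
    push_cast
    push_cast at hm
    nlinarith [hm, hβ]
  calc ((Nat.factorial (j+1) : ℝ) ^ α) ^ 2 * (Real.log (((j+1:ℕ):ℝ) + Real.exp 1) ^ (β * ((j+1:ℕ):ℝ))) ^ 2
      ≤ ((Nat.factorial j : ℝ) ^ α * (Nat.factorial (j+2) : ℝ) ^ α)
        * (Real.log ((j:ℝ) + Real.exp 1) ^ (β * (j:ℝ))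
          * Real.log (((j+2:ℕ):ℝ) + Real.exp 1) ^ (β * ((j+2:ℕ):ℝ))) := by
        apply mul_le_mul hF hL (sq_nonneg _) (by positivity)
    _ = (Nat.factorial j : ℝ) ^ α * Real.log ((j:ℝ) + Real.exp 1) ^ (β * (j:ℝ))
        * ((Nat.factorial (j+2) : ℝ) ^ α * Real.log (((j+2:ℕ):ℝ) + Real.exp 1) ^ (β * ((j+2:ℕ):ℝ))) := by
        ring

lemma aux_j_mul {j m : ℕ} (hjm : j ≤ m) :
    (j:ℝ) * (Real.log (Real.log ((m:ℝ) + Real.exp 1))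
      - Real.log (Real.log ((j:ℝ) + Real.exp 1))) ≤ (m:ℝ) := by
  have h := aux_loglog_diff j.cast_nonneg (by exact_mod_cast hjm : (j:ℝ) ≤ (m:ℝ))
  have hE : (0:ℝ) < Real.exp 1 := Real.exp_pos 1
  have hjE : (0:ℝ) < (j:ℝ) + Real.exp 1 := by positivity
  have h2 : (j:ℝ) * (((m:ℝ) - (j:ℝ)) / ((j:ℝ) + Real.exp 1)) ≤ (m:ℝ) := by
    rw [mul_div_assoc', div_le_iff₀ hjE]
    have hj0 : (0:ℝ) ≤ (j:ℝ) := j.cast_nonneg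
    have hm0 : (0:ℝ) ≤ (m:ℝ) := m.cast_nonneg
    nlinarith
  calc (j:ℝ) * _ ≤ (j:ℝ) * (((m:ℝ) - (j:ℝ)) / ((j:ℝ) + Real.exp 1)) :=
        mul_le_mul_of_nonneg_left h j.cast_nonneg
    _ ≤ (m:ℝ) := h2

lemma aux_factorial_bound (j k : ℕ) :
    ((Nat.factorial (j+k) : ℝ)) ≤ 2^(j+k) * (Nat.factorial j) * (Nat.factorial k) := by
  have h1 : Nat.factorial (j+k) = (j+k).choose k * Nat.factorial j * Nat.factorial k :=
    (Nat.add_choose_mul_factorial_mul_factorial j k).symm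
  have h2 : (j+k).choose k ≤ 2^(j+k) := by
    calc (j+k).choose k ≤ ∑ m ∈ Finset.range (j+k+1), (j+k).choose m :=
          Finset.single_le_sum (fun i _ => Nat.zero_le _)
            (Finset.mem_range.2 (by omega))
      _ = 2^(j+k) := Nat.sum_range_choose (j+k)
  have : Nat.factorial (j+k) ≤ 2^(j+k) * Nat.factorial j * Nat.factorial k := by
    rw [h1]
    exact Nat.mul_le_mul_right _ (Nat.mul_le_mul_right _ h2)
  exact_mod_cast this

lemma Mab_growth (α β : ℝ) (hα : 0 ≤ α) (hβ : 0 ≤ β) (j k : ℕ) :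
    Mab α β (j+k) ≤ ((2:ℝ)^α * Real.exp (2*β))^(j+k) * (Mab α β j * Mab α β k) := by
  unfold Mab
  set n := j + k with hn
  have hF : ((Nat.factorial n : ℝ)) ^ α
      ≤ (((2:ℝ)^α)^n) * ((Nat.factorial j : ℝ) ^ α * (Nat.factorial k : ℝ) ^ α) := by
    have h2n : (((2:ℝ)^α)^n) = ((2:ℝ)^(n:ℕ) : ℝ) ^ α := by
      rw [← Real.rpow_natCast ((2:ℝ)^α) n, ← Real.rpow_natCast (2:ℝ) n,
        ← Real.rpow_mul (by norm_num : (0:ℝ) ≤ 2), ← Real.rpow_mul (by norm_num : (0:ℝ) ≤ 2),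
        mul_comm]
    rw [h2n, ← Real.mul_rpow (by positivity) (Nat.cast_nonneg _),
      ← Real.mul_rpow (by positivity) (by positivity)]
    apply Real.rpow_le_rpow (Nat.cast_nonneg _) _ hα
    calc ((Nat.factorial n : ℝ)) ≤ 2^n * (Nat.factorial j) * (Nat.factorial k) :=
          aux_factorial_bound j k
      _ = (2:ℝ)^n * ((Nat.factorial j : ℝ) * (Nat.factorial k : ℝ)) := by push_cast; ring
  have hL : Real.log ((n:ℝ) + Real.exp 1) ^ (β * (n:ℝ))
      ≤ (Real.exp (2*β))^n * (Real.log ((j:ℝ) + Real.exp 1) ^ (β * (j:ℝ))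
        * Real.log ((k:ℝ) + Real.exp 1) ^ (β * (k:ℝ))) := by
    have pn : (0:ℝ) < Real.log ((n:ℝ) + Real.exp 1) := aux_log_pos n.cast_nonneg
    have pj : (0:ℝ) < Real.log ((j:ℝ) + Real.exp 1) := aux_log_pos j.cast_nonneg
    have pk : (0:ℝ) < Real.log ((k:ℝ) + Real.exp 1) := aux_log_pos k.cast_nonneg
    rw [Real.rpow_def_of_pos pn, Real.rpow_def_of_pos pj, Real.rpow_def_of_pos pk,
      ← Real.exp_nat_mul, ← Real.exp_add, ← Real.exp_add]
    apply Real.exp_le_exp.2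
    have haj := aux_j_mul (show j ≤ n by omega)
    have hak := aux_j_mul (show k ≤ n by omega)
    have hnn : (n:ℝ) = (j:ℝ) + (k:ℝ) := by push_cast [hn]; ring
    set aj := Real.log (Real.log ((j:ℝ) + Real.exp 1))
    set ak := Real.log (Real.log ((k:ℝ) + Real.exp 1))
    set an := Real.log (Real.log ((n:ℝ) + Real.exp 1))
    have key : (n:ℝ) * an ≤ (j:ℝ) * aj + (k:ℝ) * ak + 2 * (n:ℝ) := by
      rw [hnn]; rw [hnn] at haj hak; nlinarith
    have := mul_le_mul_of_nonneg_left key hβ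
    nlinarith
  have hMj := Mab_pos α β j
  have hMk := Mab_pos α β k
  calc (Nat.factorial n : ℝ) ^ α * Real.log ((n:ℝ) + Real.exp 1) ^ (β * (n:ℝ))
      ≤ ((((2:ℝ)^α)^n) * ((Nat.factorial j : ℝ) ^ α * (Nat.factorial k : ℝ) ^ α))
        * ((Real.exp (2*β))^n * (Real.log ((j:ℝ) + Real.exp 1) ^ (β * (j:ℝ))
          * Real.log ((k:ℝ) + Real.exp 1) ^ (β * (k:ℝ)))) := by
        apply mul_le_mul hF hL (Real.rpow_nonneg (aux_log_pos n.cast_nonneg).le _) (by positivity)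
    _ = ((2:ℝ)^α * Real.exp (2*β))^n
        * ((Nat.factorial j : ℝ) ^ α * Real.log ((j:ℝ) + Real.exp 1) ^ (β * (j:ℝ))
          * ((Nat.factorial k : ℝ) ^ α * Real.log ((k:ℝ) + Real.exp 1) ^ (β * (k:ℝ)))) := by
        rw [mul_pow]; ring

lemma Mab_moderate (α β : ℝ) (hα : 0 ≤ α) (hβ : 0 ≤ β) :
    ∃ A : ℝ, ∀ j k : ℕ, 1 ≤ j + k →
      (Mab α β (j+k) / (Mab α β j * Mab α β k)) ^ ((1:ℝ)/((j:ℝ)+(k:ℝ))) ≤ A := by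
  refine ⟨(2:ℝ)^α * Real.exp (2*β), fun j k hjk => ?_⟩
  set B := (2:ℝ)^α * Real.exp (2*β) with hB
  have hB0 : (0:ℝ) ≤ B := by positivity
  have hs : (0:ℝ) < (j:ℝ) + (k:ℝ) := by
    have : (1:ℝ) ≤ (j:ℝ) + (k:ℝ) := by exact_mod_cast hjk
    linarith
  have hMj := Mab_pos α β j
  have hMk := Mab_pos α β k
  have hratio : Mab α β (j+k) / (Mab α β j * Mab α β k) ≤ B^(j+k) := by
    rw [div_le_iff₀ (by positivity)]
    exact Mab_growth α β hα hβ j k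
  have h0 : (0:ℝ) ≤ Mab α β (j+k) / (Mab α β j * Mab α β k) :=
    div_nonneg (Mab_pos α β _).le (mul_pos hMj hMk).le
  calc (Mab α β (j+k) / (Mab α β j * Mab α β k)) ^ ((1:ℝ)/((j:ℝ)+(k:ℝ)))
      ≤ (B^(j+k)) ^ ((1:ℝ)/((j:ℝ)+(k:ℝ))) :=
        Real.rpow_le_rpow h0 hratio (by positivity)
    _ = B := by
        rw [← Real.rpow_natCast B (j+k), ← Real.rpow_mul hB0]
        have : ((j+k:ℕ):ℝ) * ((1:ℝ)/((j:ℝ)+(k:ℝ))) = 1 := by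
          push_cast
          field_simp
        rw [this, Real.rpow_one]

lemma aux_tangent {x y β : ℝ} (hx : 1 ≤ x) (hxy : x ≤ y) (hb : 1 < β) :
    (β-1) * (y-x) * y^(-β) ≤ x^(1-β) - y^(1-β) := by
  have hx0 : (0:ℝ) < x := by linarith
  have hy0 : (0:ℝ) < y := by linarith
  have hB := one_add_mul_self_le_rpow_one_add (by
    have : (0:ℝ) ≤ (y-x)/x := div_nonneg (by linarith) hx0.le
    linarith : (-1:ℝ) ≤ (y-x)/x) hb.le
  have h1 : 1 + (y-x)/x = y/x := by field_simp; ring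
  rw [h1, Real.div_rpow hy0.le hx0.le] at hB
  have hA : (0:ℝ) < x^β := Real.rpow_pos_of_pos hx0 β
  have hBp : (0:ℝ) < y^β := Real.rpow_pos_of_pos hy0 β
  have hxb : x^(1-β) = x / x^β := by rw [Real.rpow_sub hx0, Real.rpow_one]
  have hyb : y^(1-β) = y / y^β := by rw [Real.rpow_sub hy0, Real.rpow_one]
  have hynb : y^(-β) = (y^β)⁻¹ := by rw [Real.rpow_neg hy0.le]
  have hstep := mul_le_mul_of_nonneg_left hB (mul_pos hx0 hA).le
  have hL : (x*x^β) * (1 + β*((y-x)/x)) = x*x^β + β*(x^β*(y-x)) := by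
    field_simp
  have hR : (x*x^β) * (y^β/x^β) = x*y^β := by
    field_simp
  rw [hL, hR] at hstep
  rw [hxb, hyb, hynb, div_sub_div _ _ (ne_of_gt hA) (ne_of_gt hBp),
    le_div_iff₀ (mul_pos hA hBp)]
  have hsimp : (β-1)*(y-x)*(y^β)⁻¹ * (x^β*y^β) = (β-1)*(y-x)*x^β := by
    field_simp
  rw [hsimp]
  nlinarith [hstep]

lemma aux2 (j : ℕ) :
    (j:ℝ) * (Real.log (Real.log ((j:ℝ)+1 + Real.exp 1))
      - Real.log (Real.log ((j:ℝ) + Real.exp 1))) ≤ 1 := by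
  have h := aux_loglog_diff j.cast_nonneg (by linarith : (j:ℝ) ≤ (j:ℝ)+1)
  have hE : (0:ℝ) < Real.exp 1 := Real.exp_pos 1
  have hjE : (0:ℝ) < (j:ℝ) + Real.exp 1 := by positivity
  have h2 : (j:ℝ) * (((j:ℝ)+1 - (j:ℝ)) / ((j:ℝ) + Real.exp 1)) ≤ 1 := by
    rw [mul_div_assoc', div_le_one hjE]
    have : (0:ℝ) ≤ (j:ℝ) := j.cast_nonneg
    nlinarith
  calc (j:ℝ) * _ ≤ (j:ℝ) * (((j:ℝ)+1 - (j:ℝ)) / ((j:ℝ) + Real.exp 1)) :=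
        mul_le_mul_of_nonneg_left h j.cast_nonneg
    _ ≤ 1 := h2

lemma Mab_ratio_le (α β : ℝ) (hα : 0 ≤ α) (hβ : 0 ≤ β) (j : ℕ) :
    Mab α β j / (((j:ℝ)+1) * Mab α β (j+1))
      ≤ (((j:ℝ)+1)^(1+α) * Real.log ((j:ℝ)+1+Real.exp 1) ^ β)⁻¹ := by
  have hj1 : (0:ℝ) < (j:ℝ)+1 := by positivity
  have hl0 : (0:ℝ) < Real.log ((j:ℝ)+Real.exp 1) := aux_log_pos j.cast_nonneg
  have hl1 : (0:ℝ) < Real.log ((j:ℝ)+1+Real.exp 1) := aux_log_pos (by positivity)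
  have hM1 : (0:ℝ) < Mab α β (j+1) := Mab_pos α β (j+1)
  have hX : (0:ℝ) < ((j:ℝ)+1)^(1+α) * Real.log ((j:ℝ)+1+Real.exp 1) ^ β :=
    mul_pos (Real.rpow_pos_of_pos hj1 _) (Real.rpow_pos_of_pos hl1 _)
  rw [inv_eq_one_div, div_le_div_iff₀ (mul_pos hj1 hM1) hX, one_mul]
  unfold Mab
  push_cast [Nat.factorial_succ]
  have e1 : ((j:ℝ)+1)^(1+α) = ((j:ℝ)+1) * ((j:ℝ)+1)^α := by
    rw [Real.rpow_add hj1, Real.rpow_one]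
  have e2 : (((j:ℝ)+1)*(Nat.factorial j : ℝ))^α = ((j:ℝ)+1)^α * (Nat.factorial j : ℝ)^α :=
    Real.mul_rpow hj1.le (Nat.cast_nonneg _)
  have e3 : Real.log ((j:ℝ)+1+Real.exp 1)^(β*((j:ℝ)+1))
      = Real.log ((j:ℝ)+1+Real.exp 1)^(β*(j:ℝ)) * Real.log ((j:ℝ)+1+Real.exp 1)^β := by
    rw [← Real.rpow_add hl1]; ring_nf
  have e4 : Real.log ((j:ℝ)+Real.exp 1)^(β*(j:ℝ)) ≤ Real.log ((j:ℝ)+1+Real.exp 1)^(β*(j:ℝ)) := by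
    apply Real.rpow_le_rpow hl0.le (Real.log_le_log (by positivity) (by linarith)) (by positivity)
  have hA : (0:ℝ) ≤ ((j:ℝ)+1)*(((j:ℝ)+1)^α)*((Nat.factorial j : ℝ)^α)
      *(Real.log ((j:ℝ)+1+Real.exp 1)^β) := by positivity
  calc (Nat.factorial j : ℝ)^α * Real.log ((j:ℝ)+Real.exp 1)^(β*(j:ℝ))
        * (((j:ℝ)+1)^(1+α) * Real.log ((j:ℝ)+1+Real.exp 1)^β)
      = (((j:ℝ)+1)*(((j:ℝ)+1)^α)*((Nat.factorial j : ℝ)^α)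
          *(Real.log ((j:ℝ)+1+Real.exp 1)^β)) * Real.log ((j:ℝ)+Real.exp 1)^(β*(j:ℝ)) := by
        rw [e1]; ring
    _ ≤ (((j:ℝ)+1)*(((j:ℝ)+1)^α)*((Nat.factorial j : ℝ)^α)
          *(Real.log ((j:ℝ)+1+Real.exp 1)^β)) * Real.log ((j:ℝ)+1+Real.exp 1)^(β*(j:ℝ)) :=
        mul_le_mul_of_nonneg_left e4 hA
    _ = ((j:ℝ)+1) * ((((j:ℝ)+1)*(Nat.factorial j : ℝ))^α
          * Real.log ((j:ℝ)+1+Real.exp 1)^(β*((j:ℝ)+1))) := by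
        rw [e2, e3]; ring

lemma Mab_ratio_ge (β : ℝ) (hβ : 0 ≤ β) (hβ1 : β ≤ 1) (j : ℕ) :
    Real.exp (-β) * (((j:ℝ)+1) * Real.log ((j:ℝ)+1+Real.exp 1))⁻¹
      ≤ Mab 0 β j / (((j:ℝ)+1) * Mab 0 β (j+1)) := by
  have hj1 : (0:ℝ) < (j:ℝ)+1 := by positivity
  have hl0 : (0:ℝ) < Real.log ((j:ℝ)+Real.exp 1) := aux_log_pos j.cast_nonneg
  have hl1 : (0:ℝ) < Real.log ((j:ℝ)+1+Real.exp 1) := aux_log_pos (by positivity)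
  have hl1' : (1:ℝ) ≤ Real.log ((j:ℝ)+1+Real.exp 1) := aux_one_le_log (by positivity)
  have hM1 : (0:ℝ) < Mab 0 β (j+1) := Mab_pos 0 β (j+1)
  rw [le_div_iff₀ (mul_pos hj1 hM1)]
  have hMab0 : Mab 0 β j = Real.log ((j:ℝ)+Real.exp 1)^(β*(j:ℝ)) := by
    simp [Mab]
  have hMab1 : Mab 0 β (j+1) = Real.log ((j:ℝ)+1+Real.exp 1)^(β*((j:ℝ)+1)) := by
    simp only [Mab, Real.rpow_zero, one_mul]
    push_cast
    ring_nf
  rw [hMab0, hMab1]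
  have key : Real.exp (-β) * (((j:ℝ)+1) * Real.log ((j:ℝ)+1+Real.exp 1))⁻¹
      * (((j:ℝ)+1) * Real.log ((j:ℝ)+1+Real.exp 1)^(β*((j:ℝ)+1)))
      = Real.exp (-β) * Real.log ((j:ℝ)+1+Real.exp 1)^(β*((j:ℝ)+1) - 1) := by
    rw [Real.rpow_sub hl1, Real.rpow_one]
    field_simp
  rw [key]
  have step1 : Real.log ((j:ℝ)+1+Real.exp 1)^(β*((j:ℝ)+1) - 1)
      ≤ Real.log ((j:ℝ)+1+Real.exp 1)^(β*(j:ℝ)) := by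
    apply Real.rpow_le_rpow_of_exponent_le hl1'
    nlinarith
  have step2 : Real.exp (-β) * Real.log ((j:ℝ)+1+Real.exp 1)^(β*(j:ℝ))
      ≤ Real.log ((j:ℝ)+Real.exp 1)^(β*(j:ℝ)) := by
    rw [Real.rpow_def_of_pos hl1, Real.rpow_def_of_pos hl0, ← Real.exp_add]
    apply Real.exp_le_exp.2
    have h2 := aux2 j
    have := mul_le_mul_of_nonneg_left h2 hβ
    nlinarith
  calc Real.exp (-β) * Real.log ((j:ℝ)+1+Real.exp 1)^(β*((j:ℝ)+1) - 1)
      ≤ Real.exp (-β) * Real.log ((j:ℝ)+1+Real.exp 1)^(β*(j:ℝ)) :=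
        mul_le_mul_of_nonneg_left step1 (Real.exp_pos _).le
    _ ≤ Real.log ((j:ℝ)+Real.exp 1)^(β*(j:ℝ)) := step2

lemma aux_log_double (j : ℕ) :
    Real.log ((j:ℝ)+1+Real.exp 1) ≤ 2 * Real.log ((j:ℝ)+Real.exp 1) := by
  have hl0 : (1:ℝ) ≤ Real.log ((j:ℝ)+Real.exp 1) := aux_one_le_log j.cast_nonneg
  have hE : (0:ℝ) < Real.exp 1 := Real.exp_pos 1
  have h1 : Real.log ((j:ℝ)+1+Real.exp 1) ≤ Real.log (2*((j:ℝ)+Real.exp 1)) := by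
    apply Real.log_le_log (by positivity)
    nlinarith [Real.exp_one_gt_d9]
  have h2 : Real.log (2*((j:ℝ)+Real.exp 1)) = Real.log 2 + Real.log ((j:ℝ)+Real.exp 1) := by
    rw [Real.log_mul (by norm_num) (by positivity)]
  have h3 : Real.log 2 ≤ 1 := by
    rw [← Real.log_exp 1]
    apply Real.log_le_log (by norm_num)
    nlinarith [Real.exp_one_gt_d9]
  linarith

lemma Mab_not_summable (β : ℝ) (hβ : 0 ≤ β) (hβ1 : β ≤ 1) :
    ¬ Summable (fun j : ℕ => Mab 0 β j / (((j:ℝ)+1) * Mab 0 β (j+1))) := by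
  intro hs
  set a : ℕ → ℝ := fun n => Real.log (Real.log ((n:ℝ) + Real.exp 1)) with ha
  have hE1 : (1:ℝ) ≤ Real.exp 1 := by nlinarith [Real.exp_one_gt_d9]
  have hdiff : ∀ j : ℕ, a (j+1) - a j
      ≤ (2*Real.exp β) * (Mab 0 β j / (((j:ℝ)+1) * Mab 0 β (j+1))) := by
    intro j
    have hl0 : (1:ℝ) ≤ Real.log ((j:ℝ)+Real.exp 1) := aux_one_le_log j.cast_nonneg
    have hl0p : (0:ℝ) < Real.log ((j:ℝ)+Real.exp 1) := by linarith
    have hl1 : (0:ℝ) < Real.log ((j:ℝ)+1+Real.exp 1) := aux_log_pos (by positivity)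
    have hl10 : Real.log ((j:ℝ)+Real.exp 1) ≤ Real.log ((j:ℝ)+1+Real.exp 1) :=
      Real.log_le_log (by positivity) (by linarith)
    have h1 : a (j+1) - a j ≤ (Real.log ((j:ℝ)+1+Real.exp 1) - Real.log ((j:ℝ)+Real.exp 1))
        / Real.log ((j:ℝ)+Real.exp 1) := by
      have := aux_loglog_diff1 j.cast_nonneg (by linarith : (j:ℝ) ≤ (j:ℝ)+1)
      have hcast : ((j+1:ℕ):ℝ) = (j:ℝ)+1 := by push_cast; ring
      simp only [ha, hcast]
      exact this
    have hd := aux_log_diff j.cast_nonneg (by linarith : (j:ℝ) ≤ (j:ℝ)+1)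
    rw [le_div_iff₀ (by positivity : (0:ℝ) < (j:ℝ)+Real.exp 1)] at hd
    have key : (Real.log ((j:ℝ)+1+Real.exp 1) - Real.log ((j:ℝ)+Real.exp 1))
        / Real.log ((j:ℝ)+Real.exp 1)
        ≤ 2 * (((j:ℝ)+1) * Real.log ((j:ℝ)+1+Real.exp 1))⁻¹ := by
      rw [← div_eq_mul_inv, div_le_div_iff₀ hl0p (by positivity)]
      have s1 : (Real.log ((j:ℝ)+1+Real.exp 1) - Real.log ((j:ℝ)+Real.exp 1)) * ((j:ℝ)+1) ≤ 1 := by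
        nlinarith [hd, (Nat.cast_nonneg j : (0:ℝ) ≤ (j:ℝ))]
      have s2 : (Real.log ((j:ℝ)+1+Real.exp 1) - Real.log ((j:ℝ)+Real.exp 1))
          * (((j:ℝ)+1) * Real.log ((j:ℝ)+1+Real.exp 1)) ≤ Real.log ((j:ℝ)+1+Real.exp 1) := by
        nlinarith [s1, hl1]
      nlinarith [s2, aux_log_double j, hl0p]
    have hratio := Mab_ratio_ge β hβ hβ1 j
    have hX : (((j:ℝ)+1) * Real.log ((j:ℝ)+1+Real.exp 1))⁻¹
        ≤ Real.exp β * (Mab 0 β j / (((j:ℝ)+1) * Mab 0 β (j+1))) := by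
      have := mul_le_mul_of_nonneg_left hratio (Real.exp_pos β).le
      have hone : Real.exp β * (Real.exp (-β)
          * (((j:ℝ)+1) * Real.log ((j:ℝ)+1+Real.exp 1))⁻¹)
          = (((j:ℝ)+1) * Real.log ((j:ℝ)+1+Real.exp 1))⁻¹ := by
        rw [← mul_assoc, ← Real.exp_add]
        simp
      rwa [hone] at this
    calc a (j+1) - a j ≤ _ := h1
      _ ≤ 2 * (((j:ℝ)+1) * Real.log ((j:ℝ)+1+Real.exp 1))⁻¹ := key
      _ ≤ 2 * (Real.exp β * (Mab 0 β j / (((j:ℝ)+1) * Mab 0 β (j+1)))) := by linarith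
      _ = (2*Real.exp β) * (Mab 0 β j / (((j:ℝ)+1) * Mab 0 β (j+1))) := by ring
  have hanonneg : ∀ j : ℕ, 0 ≤ a (j+1) - a j := by
    intro j
    have hl0p : (0:ℝ) < Real.log ((j:ℝ)+Real.exp 1) := aux_log_pos j.cast_nonneg
    have : Real.log ((j:ℝ)+Real.exp 1) ≤ Real.log (((j+1:ℕ):ℝ)+Real.exp 1) :=
      Real.log_le_log (by positivity) (by push_cast; linarith)
    have := Real.log_le_log hl0p this
    simp only [ha]
    linarith
  have hsum2 : Summable (fun j : ℕ => a (j+1) - a j) :=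
    Summable.of_nonneg_of_le hanonneg hdiff (hs.mul_left (2*Real.exp β))
  have h3 := hsum2.hasSum.tendsto_sum_nat
  have h4 : Tendsto (fun n : ℕ => a n - a 0) atTop (𝓝 (∑' j, (a (j+1) - a j))) := by
    have : ∀ n : ℕ, ∑ i ∈ Finset.range n, (a (i+1) - a i) = a n - a 0 := fun n =>
      Finset.sum_range_sub a n
    simpa only [this] using h3
  have h5 : Tendsto (fun n : ℕ => a n - a 0) atTop atTop := by
    have haT : Tendsto a atTop atTop := by
      have h6 : Tendsto (fun n : ℕ => (n:ℝ) + Real.exp 1) atTop atTop :=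
        tendsto_atTop_add_const_right atTop (Real.exp 1) tendsto_natCast_atTop_atTop
      have := Real.tendsto_log_atTop.comp (Real.tendsto_log_atTop.comp h6)
      simpa [ha, Function.comp_def] using this
    simpa [sub_eq_add_neg] using tendsto_atTop_add_const_right atTop (-(a 0)) haT
  exact not_tendsto_nhds_of_tendsto_atTop h5 _ h4

lemma Mab_summable_alpha (α β : ℝ) (hα : 0 < α) (hβ : 0 ≤ β) :
    Summable (fun j : ℕ => Mab α β j / (((j:ℝ)+1) * Mab α β (j+1))) := by
  have hsummable : Summable (fun j : ℕ => (((j:ℝ)+1)^(1+α))⁻¹) := by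
    have h0 : Summable (fun n : ℕ => ((n:ℝ)^(1+α))⁻¹) :=
      Real.summable_nat_rpow_inv.2 (by linarith)
    have h1 := (summable_nat_add_iff 1).2 h0
    apply h1.congr
    intro n
    push_cast
    ring_nf
  apply Summable.of_nonneg_of_le _ _ hsummable
  · intro j
    exact (div_pos (Mab_pos α β j) (mul_pos (by positivity) (Mab_pos α β (j+1)))).le
  · intro j
    have hl1 : (1:ℝ) ≤ Real.log ((j:ℝ)+1+Real.exp 1) := aux_one_le_log (by positivity)
    have hj1 : (0:ℝ) < ((j:ℝ)+1)^(1+α) := Real.rpow_pos_of_pos (by positivity) _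
    refine (Mab_ratio_le α β hα.le hβ j).trans ?_
    apply inv_anti₀ hj1
    exact le_mul_of_one_le_right hj1.le (Real.one_le_rpow hl1 hβ)

lemma Mab_summable_beta (β : ℝ) (hβ1 : 1 < β) :
    Summable (fun j : ℕ => Mab 0 β j / (((j:ℝ)+1) * Mab 0 β (j+1))) := by
  have hβ : (0:ℝ) ≤ β := by linarith
  set h : ℕ → ℝ := fun n => Real.log ((n:ℝ) + Real.exp 1) ^ (1-β) with hh
  have hE1 : (1:ℝ) ≤ Real.exp 1 := by nlinarith [Real.exp_one_gt_d9]
  have htel : Summable (fun j : ℕ => h j - h (j+1)) := by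
    apply summable_of_sum_range_le (c := h 0)
    · intro j
      have hl0 : (1:ℝ) ≤ Real.log ((j:ℝ)+Real.exp 1) := aux_one_le_log j.cast_nonneg
      have hmono : Real.log ((j:ℝ)+Real.exp 1) ≤ Real.log (((j+1:ℕ):ℝ)+Real.exp 1) :=
        Real.log_le_log (by positivity) (by push_cast; linarith)
      have := Real.rpow_le_rpow_of_nonpos (by linarith) hmono (by linarith : 1-β ≤ 0)
      simp only [hh]
      linarith
    · intro n
      rw [Finset.sum_range_sub' h n]
      have hl : (0:ℝ) ≤ Real.log ((n:ℝ)+Real.exp 1) := (aux_log_pos n.cast_nonneg).le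
      have : 0 ≤ h n := Real.rpow_nonneg hl _
      linarith
  refine Summable.of_nonneg_of_le (fun j => ?_) (fun j => ?_)
    (htel.mul_left ((1+Real.exp 1)/(β-1)))
  · exact (div_pos (Mab_pos 0 β j) (mul_pos (by positivity) (Mab_pos 0 β (j+1)))).le
  · have hl0 : (1:ℝ) ≤ Real.log ((j:ℝ)+Real.exp 1) := aux_one_le_log j.cast_nonneg
    have hl1p : (0:ℝ) < Real.log ((j:ℝ)+1+Real.exp 1) := aux_log_pos (by positivity)
    have hxy : Real.log ((j:ℝ)+Real.exp 1) ≤ Real.log ((j:ℝ)+1+Real.exp 1) :=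
      Real.log_le_log (by positivity) (by linarith)
    have ht := aux_tangent hl0 hxy hβ1
    have hlow := aux_log_diff_ge j.cast_nonneg (by linarith : (j:ℝ) ≤ (j:ℝ)+1)
    have hlow2 : 1/((1+Real.exp 1)*((j:ℝ)+1)) ≤
        Real.log ((j:ℝ)+1+Real.exp 1) - Real.log ((j:ℝ)+Real.exp 1) := by
      refine le_trans ?_ hlow
      rw [div_le_div_iff₀ (by positivity) (by positivity)]
      nlinarith [(Nat.cast_nonneg j : (0:ℝ) ≤ (j:ℝ))]
    have hneg : (0:ℝ) < Real.log ((j:ℝ)+1+Real.exp 1) ^ (-β) :=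
      Real.rpow_pos_of_pos hl1p _
    have hcast : ((j+1:ℕ):ℝ) = (j:ℝ)+1 := by push_cast; ring
    have h2 : (β-1) * (Real.log ((j:ℝ)+1+Real.exp 1) - Real.log ((j:ℝ)+Real.exp 1))
        * Real.log ((j:ℝ)+1+Real.exp 1) ^ (-β) ≤ h j - h (j+1) := by
      simp only [hh, hcast]
      exact ht
    have h3 : (β-1) * (1/((1+Real.exp 1)*((j:ℝ)+1)))
        * Real.log ((j:ℝ)+1+Real.exp 1) ^ (-β)
        ≤ (β-1) * (Real.log ((j:ℝ)+1+Real.exp 1) - Real.log ((j:ℝ)+Real.exp 1))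
          * Real.log ((j:ℝ)+1+Real.exp 1) ^ (-β) := by
      apply mul_le_mul_of_nonneg_right _ hneg.le
      apply mul_le_mul_of_nonneg_left hlow2 (by linarith)
    have h4 := mul_le_mul_of_nonneg_left (le_trans h3 h2)
      (show (0:ℝ) ≤ (1+Real.exp 1)/(β-1) from div_nonneg (by positivity) (by linarith))
    have heq : ((1+Real.exp 1)/(β-1)) * ((β-1) * (1/((1+Real.exp 1)*((j:ℝ)+1)))
        * Real.log ((j:ℝ)+1+Real.exp 1) ^ (-β))
        = (((j:ℝ)+1) * Real.log ((j:ℝ)+1+Real.exp 1) ^ β)⁻¹ := by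
      rw [Real.rpow_neg hl1p.le]
      have hb1 : β - 1 ≠ 0 := by linarith
      have hlb : Real.log ((j:ℝ)+1+Real.exp 1) ^ β ≠ 0 :=
        (Real.rpow_pos_of_pos hl1p β).ne'
      field_simp
    rw [heq] at h4
    calc Mab 0 β j / (((j:ℝ)+1) * Mab 0 β (j+1))
        ≤ (((j:ℝ)+1)^((1:ℝ)+0) * Real.log ((j:ℝ)+1+Real.exp 1) ^ β)⁻¹ :=
          Mab_ratio_le 0 β le_rfl hβ j
      _ = (((j:ℝ)+1) * Real.log ((j:ℝ)+1+Real.exp 1) ^ β)⁻¹ := by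
          norm_num
      _ ≤ (1+Real.exp 1)/(β-1) * (h j - h (j+1)) := h4

/-- The sequences `M_j = (j!)^α·(ln(j+e))^{βj}` are normalized, increasing,
log-convex, of moderate growth, and quasianalytic iff `α = 0` and `β ≤ 1`. -/
theorem Mab_properties (α β : ℝ) (hα : 0 ≤ α) (hβ : 0 ≤ β) :
    Mab α β 0 = 1 ∧
    Monotone (Mab α β) ∧
    (∀ j : ℕ, (Mab α β (j+1)) ^ 2 ≤ Mab α β j * Mab α β (j+2)) ∧
    (∃ A : ℝ, ∀ j k : ℕ, 1 ≤ j + k →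
      (Mab α β (j+k) / (Mab α β j * Mab α β k)) ^ ((1:ℝ)/((j:ℝ)+(k:ℝ))) ≤ A) ∧
    (¬ Summable (fun j : ℕ => Mab α β j / (((j:ℝ)+1) * Mab α β (j+1)))
      ↔ (α = 0 ∧ β ≤ 1)) := by
  refine ⟨Mab_zero α β, Mab_mono α β hα hβ, Mab_logconvex α β hα hβ,
    Mab_moderate α β hα hβ, ?_⟩
  constructor
  · intro hns
    by_contra hc
    push_neg at hc
    rcases hα.eq_or_lt with heq | hlt
    · have h0 : α = 0 := heq.symm
      subst h0
      exact hns (Mab_summable_beta β (hc rfl))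
    · exact hns (Mab_summable_alpha α β hlt hβ)
  · rintro ⟨h0, h1⟩
    subst h0
    exact Mab_not_summable β hβ h1
end
end

section
/- For real numbers α ≥ 0 and β ≥ 0, let M_j = (j!)^α·(ln(j+e))^{β·j}. Then M satisfies the strong non-quasianalyticity condition sup_{k∈ℕ} (M_{k+1}/M_k)·∑_{j≥k} M_j/((j+1)·M_{j+1}) < ∞ if and only if α > 0. In particular, the Gevrey sequences M_j = (j!)^α with α > 0 are strongly non-quasianalytic. -/
open Set Filter Topology

noncomputable section

noncomputable def Lg (j : ℕ) : ℝ := Real.log ((j:ℝ) + Real.exp 1)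

lemma one_le_Lg (j : ℕ) : 1 ≤ Lg j := by
  have h : Real.exp 1 ≤ (j:ℝ) + Real.exp 1 := le_add_of_nonneg_left (Nat.cast_nonneg j)
  calc (1:ℝ) = Real.log (Real.exp 1) := (Real.log_exp 1).symm
    _ ≤ _ := Real.log_le_log (Real.exp_pos 1) h

lemma Lg_pos (j : ℕ) : 0 < Lg j := lt_of_lt_of_le one_pos (one_le_Lg j)

lemma Lg_mono {j m : ℕ} (h : j ≤ m) : Lg j ≤ Lg m := by
  apply Real.log_le_log (by positivity)
  have : (j:ℝ) ≤ m := Nat.cast_le.2 h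
  linarith

lemma Lg_succ_le (j : ℕ) : Lg (j+1) ≤ 1 + Lg j := by
  have h2 : ((j+1:ℕ):ℝ) + Real.exp 1 ≤ 2 * ((j:ℝ) + Real.exp 1) := by
    push_cast
    have := Real.exp_one_gt_d9
    linarith
  calc Lg (j+1) ≤ Real.log (2 * ((j:ℝ) + Real.exp 1)) := Real.log_le_log (by positivity) h2
    _ = Real.log 2 + Lg j := by
        rw [Real.log_mul two_ne_zero (by positivity)]; rfl
    _ ≤ 1 + Lg j := by
        have : Real.log 2 ≤ 1 := by
          calc Real.log 2 ≤ Real.log (Real.exp 1) :=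
            Real.log_le_log two_pos (by have := Real.exp_one_gt_d9; linarith)
          _ = 1 := Real.log_exp 1
        linarith

lemma Lg_succ_le_two (j : ℕ) : Lg (j+1) ≤ 2 * Lg j := by
  have := Lg_succ_le j; have := one_le_Lg j; linarith

lemma Mab_succ (α β : ℝ) (j : ℕ) :
    Mab α β (j+1) = ((j:ℝ)+1)^α * ((Nat.factorial j : ℝ)^α * (Lg (j+1)^(β*(j:ℝ)) * Lg (j+1)^β)) := by
  have hL : 0 < Real.log ((j:ℝ) + 1 + Real.exp 1) := by
    have := Lg_pos (j+1); unfold Lg at this; push_cast at this; exact this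
  unfold Mab Lg
  rw [Nat.factorial_succ]
  push_cast
  rw [Real.mul_rpow (by positivity) (by positivity),
    show β * ((j:ℝ)+1) = β*(j:ℝ) + β by ring, Real.rpow_add hL]
  ring

lemma ratio_lb (α β : ℝ) (hα : 0 ≤ α) (hβ : 0 ≤ β) (j : ℕ) :
    ((j:ℝ)+1)^α * Lg j ^ β * Mab α β j ≤ Mab α β (j+1) := by
  rw [Mab_succ]
  unfold Mab Lg
  have h1 : Real.log ((j:ℝ) + Real.exp 1) ^ (β*(j:ℝ)) ≤ Lg (j+1) ^ (β*(j:ℝ)) :=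
    Real.rpow_le_rpow (Lg_pos j).le (Lg_mono (Nat.le_succ j)) (by positivity)
  have h2 : Real.log ((j:ℝ) + Real.exp 1) ^ β ≤ Lg (j+1) ^ β :=
    Real.rpow_le_rpow (Lg_pos j).le (Lg_mono (Nat.le_succ j)) hβ
  have hf : (0:ℝ) ≤ (Nat.factorial j : ℝ)^α := by positivity
  have hj : (0:ℝ) ≤ ((j:ℝ)+1)^α := by positivity
  have hLj : (0:ℝ) ≤ Real.log ((j:ℝ) + Real.exp 1) ^ (β*(j:ℝ)) := by
    have := Lg_pos j; unfold Lg at this; positivity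
  have hLb : (0:ℝ) ≤ Real.log ((j:ℝ) + Real.exp 1) ^ β := by
    have := Lg_pos j; unfold Lg at this; positivity
  calc ((j:ℝ)+1)^α * Real.log ((j:ℝ) + Real.exp 1) ^ β *
        ((Nat.factorial j : ℝ)^α * Real.log ((j:ℝ) + Real.exp 1) ^ (β*(j:ℝ)))
      ≤ ((j:ℝ)+1)^α * Lg (j+1) ^ β *
        ((Nat.factorial j : ℝ)^α * Lg (j+1) ^ (β*(j:ℝ))) := by
        apply mul_le_mul (by exact mul_le_mul_of_nonneg_left h2 hj)
          (mul_le_mul_of_nonneg_left h1 hf) (mul_nonneg hf hLj)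
          (mul_nonneg hj (Real.rpow_nonneg (Lg_pos _).le β))
    _ = ((j:ℝ)+1)^α * ((Nat.factorial j : ℝ)^α * (Lg (j+1)^(β*(j:ℝ)) * Lg (j+1)^β)) := by ring

lemma one_add_rpow_le (x y : ℝ) (hx : 0 ≤ x) (hy : 0 ≤ y) :
    (1+x)^y ≤ Real.exp (y*x) := by
  have h1 : (0:ℝ) < 1 + x := by linarith
  rw [Real.rpow_def_of_pos h1]
  apply Real.exp_le_exp.2
  have := Real.log_le_sub_one_of_pos h1
  calc Real.log (1+x) * y ≤ x * y := by nlinarith [Real.log_nonneg (by linarith : (1:ℝ) ≤ 1+x)]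
    _ = y * x := mul_comm _ _

lemma Lg_succ_rpow_le (β : ℝ) (hβ : 0 ≤ β) (k : ℕ) :
    Lg (k+1) ^ (β*(k:ℝ)) ≤ Real.exp β * Lg k ^ (β*(k:ℝ)) := by
  have he : (0:ℝ) < (k:ℝ) + Real.exp 1 := by positivity
  have h1 : Lg (k+1) ≤ Lg k * (1 + 1/((k:ℝ) + Real.exp 1)) := by
    have hlog : Lg (k+1) ≤ Lg k + 1/((k:ℝ) + Real.exp 1) := by
      have heq : ((k+1:ℕ):ℝ) + Real.exp 1 = ((k:ℝ) + Real.exp 1) * (1 + 1/((k:ℝ) + Real.exp 1)) := by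
        field_simp; push_cast; ring
      unfold Lg
      rw [heq, Real.log_mul (ne_of_gt he) (by positivity)]
      have := Real.log_le_sub_one_of_pos (show (0:ℝ) < 1 + 1/((k:ℝ) + Real.exp 1) by positivity)
      have hLgk : Real.log ((k:ℝ) + Real.exp 1) = Lg k := rfl
      linarith
    have := one_le_Lg k
    have hpos : (0:ℝ) ≤ 1/((k:ℝ) + Real.exp 1) := by positivity
    nlinarith
  calc Lg (k+1) ^ (β*(k:ℝ))
      ≤ (Lg k * (1 + 1/((k:ℝ) + Real.exp 1))) ^ (β*(k:ℝ)) :=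
        Real.rpow_le_rpow (Lg_pos _).le h1 (mul_nonneg hβ (Nat.cast_nonneg k))
    _ = Lg k ^ (β*(k:ℝ)) * (1 + 1/((k:ℝ) + Real.exp 1)) ^ (β*(k:ℝ)) :=
        Real.mul_rpow (Lg_pos _).le (by positivity)
    _ ≤ Lg k ^ (β*(k:ℝ)) * Real.exp β := by
        apply mul_le_mul_of_nonneg_left _ (Real.rpow_nonneg (Lg_pos k).le _)
        calc (1 + 1/((k:ℝ) + Real.exp 1)) ^ (β*(k:ℝ))
            ≤ Real.exp (β*(k:ℝ) * (1/((k:ℝ) + Real.exp 1))) :=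
              one_add_rpow_le _ _ (by positivity) (mul_nonneg hβ (Nat.cast_nonneg k))
          _ ≤ Real.exp β := by
              apply Real.exp_le_exp.2
              rw [mul_one_div, div_le_iff₀ he]
              have : β * ((k:ℝ) + Real.exp 1) = β*(k:ℝ) + β*Real.exp 1 := by ring
              rw [this]
              linarith [mul_nonneg hβ (Real.exp_pos 1).le]
    _ = Real.exp β * Lg k ^ (β*(k:ℝ)) := mul_comm _ _

lemma ratio_ub (α β : ℝ) (hβ : 0 ≤ β) (k : ℕ) :
    Mab α β (k+1) ≤ Real.exp β * (((k:ℝ)+1)^α * (Lg (k+1) ^ β * Mab α β k)) := by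
  rw [Mab_succ]
  unfold Mab Lg
  have h1 := Lg_succ_rpow_le β hβ k
  have hLgk : Real.log ((k:ℝ) + Real.exp 1) = Lg k := rfl
  have hLgk1 : Real.log (((k+1:ℕ):ℝ) + Real.exp 1) = Lg (k+1) := rfl
  rw [hLgk, hLgk1]
  calc ((k:ℝ)+1)^α * ((Nat.factorial k : ℝ)^α * (Lg (k+1)^(β*(k:ℝ)) * Lg (k+1)^β))
      ≤ ((k:ℝ)+1)^α * ((Nat.factorial k : ℝ)^α * ((Real.exp β * Lg k ^ (β*(k:ℝ))) * Lg (k+1)^β)) := by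
        apply mul_le_mul_of_nonneg_left _ (by positivity)
        apply mul_le_mul_of_nonneg_left _ (by positivity)
        have := Lg_pos (k+1)
        apply mul_le_mul_of_nonneg_right h1 (by positivity)
    _ = Real.exp β * (((k:ℝ)+1)^α * (Lg (k+1) ^ β * ((Nat.factorial k : ℝ)^α * Lg k ^ (β*(k:ℝ))))) := by ring

lemma rpow_cancel (m : ℕ) (γ : ℝ) : ((m:ℝ)+1)^(-γ) * ((m:ℝ)+1)^γ = 1 := by
  rw [← Real.rpow_add (by positivity)]; norm_num

lemma a_le (α β : ℝ) (hα : 0 ≤ α) (hβ : 0 ≤ β) (m : ℕ) :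
    Mab α β m / (((m:ℝ)+1) * Mab α β (m+1)) ≤ ((m:ℝ)+1)^(-(1+α)) / Lg m ^ β := by
  have hM := Mab_pos α β m
  have hM1 := Mab_pos α β (m+1)
  have hm1 : (0:ℝ) < (m:ℝ)+1 := by positivity
  have hLb : (0:ℝ) < Lg m ^ β := Real.rpow_pos_of_pos (Lg_pos m) β
  rw [div_le_div_iff₀ (by positivity) hLb]
  have key := ratio_lb α β hα hβ m
  have e1 : ((m:ℝ)+1)^(-(1+α)) * ((m:ℝ)+1) = ((m:ℝ)+1)^(-α) := by
    rw [show -(1+α) = -α + (-1) by ring, Real.rpow_add hm1, Real.rpow_neg_one]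
    field_simp
  have e2 := rpow_cancel m α
  have eL : Mab α β m * Lg m ^ β = ((m:ℝ)+1)^(-α) * (((m:ℝ)+1)^α * Lg m ^ β * Mab α β m) := by
    rw [show ((m:ℝ)+1)^(-α) * (((m:ℝ)+1)^α * Lg m ^ β * Mab α β m)
        = (((m:ℝ)+1)^(-α) * ((m:ℝ)+1)^α) * (Lg m ^ β * Mab α β m) from by ring, e2]
    ring
  calc Mab α β m * Lg m ^ β
      = ((m:ℝ)+1)^(-α) * (((m:ℝ)+1)^α * Lg m ^ β * Mab α β m) := eL
    _ ≤ ((m:ℝ)+1)^(-α) * Mab α β (m+1) :=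
        mul_le_mul_of_nonneg_left key (Real.rpow_nonneg hm1.le _)
    _ = ((m:ℝ)+1)^(-(1+α)) * (((m:ℝ)+1) * Mab α β (m+1)) := by rw [← mul_assoc, e1]

lemma a_ge (β : ℝ) (hβ : 0 ≤ β) (m : ℕ) :
    Real.exp (-β) / (((m:ℝ)+1) * Lg (m+1) ^ β) ≤ Mab 0 β m / (((m:ℝ)+1) * Mab 0 β (m+1)) := by
  have hM := Mab_pos 0 β m
  have hM1 := Mab_pos 0 β (m+1)
  have hm1 : (0:ℝ) < (m:ℝ)+1 := by positivity
  have hLb : (0:ℝ) < Lg (m+1) ^ β := Real.rpow_pos_of_pos (Lg_pos _) β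
  rw [div_le_div_iff₀ (by positivity) (by positivity)]
  -- exp(-β) * ((m+1) * Mab (m+1)) ≤ Mab m * ((m+1) * Lg(m+1)^β)
  have key := ratio_ub 0 β hβ m
  rw [Real.rpow_zero, one_mul] at key
  -- key : Mab 0 β (m+1) ≤ exp β * (Lg (m+1)^β * Mab 0 β m)
  have h := mul_le_mul_of_nonneg_left key (Real.exp_pos (-β)).le
  have he : Real.exp (-β) * Real.exp β = 1 := by
    rw [← Real.exp_add]; norm_num
  calc Real.exp (-β) * (((m:ℝ)+1) * Mab 0 β (m+1))
      ≤ Real.exp (-β) * (((m:ℝ)+1) * (Real.exp β * (Lg (m+1)^β * Mab 0 β m))) := by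
        apply mul_le_mul_of_nonneg_left _ (Real.exp_pos (-β)).le
        exact mul_le_mul_of_nonneg_left key hm1.le
    _ = (Real.exp (-β) * Real.exp β) * (((m:ℝ)+1) * (Lg (m+1)^β * Mab 0 β m)) := by ring
    _ = Mab 0 β m * (((m:ℝ)+1) * Lg (m+1)^β) := by rw [he]; ring

lemma rho_ge (β : ℝ) (hβ : 0 ≤ β) (k : ℕ) :
    Lg k ^ β ≤ Mab 0 β (k+1) / Mab 0 β k := by
  have hM := Mab_pos 0 β k
  rw [le_div_iff₀ hM]
  have key := ratio_lb 0 β le_rfl hβ k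
  rw [Real.rpow_zero, one_mul] at key
  exact key

lemma rho_le (α β : ℝ) (hβ : 0 ≤ β) (k : ℕ) :
    Mab α β (k+1) / Mab α β k ≤ Real.exp β * (((k:ℝ)+1)^α * Lg (k+1) ^ β) := by
  have hM := Mab_pos α β k
  rw [div_le_iff₀ hM]
  have key := ratio_ub α β hβ k
  calc Mab α β (k+1) ≤ Real.exp β * (((k:ℝ)+1)^α * (Lg (k+1) ^ β * Mab α β k)) := key
    _ = Real.exp β * (((k:ℝ)+1)^α * Lg (k+1) ^ β) * Mab α β k := by ring

lemma key_ineq {α : ℝ} (hα : 0 < α) {x : ℝ} (hx : 0 < x) :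
    α * (x+1)^(-(1+α)) ≤ x^(-α) - (x+1)^(-α) := by
  have hy : (0:ℝ) < x+1 := by linarith
  have ht : 0 < x/(x+1) := by positivity
  have hlog : Real.log (x/(x+1)) ≤ x/(x+1) - 1 := Real.log_le_sub_one_of_pos ht
  have hexp : 1 + α*(1 - x/(x+1)) ≤ (x/(x+1))^(-α) := by
    rw [Real.rpow_def_of_pos ht]
    have h1 := Real.add_one_le_exp (Real.log (x/(x+1)) * (-α))
    nlinarith
  have h1t : 1 - x/(x+1) = (x+1)⁻¹ := by field_simp; ring
  have hxeq : x = (x+1) * (x/(x+1)) := by field_simp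
  have e1 : x^(-α) = (x+1)^(-α) * (x/(x+1))^(-α) := by
    conv_lhs => rw [hxeq]
    rw [Real.mul_rpow hy.le ht.le]
  have e2 : (x+1)^(-(1+α)) = (x+1)^(-α) * (x+1)⁻¹ := by
    rw [show -(1+α) = -α + (-1) by ring, Real.rpow_add hy, Real.rpow_neg_one]
  have hP : (0:ℝ) < (x+1)^(-α) := Real.rpow_pos_of_pos hy _
  rw [e1, e2]
  rw [h1t] at hexp
  nlinarith [mul_le_mul_of_nonneg_left hexp hP.le]

lemma summable_shift (α : ℝ) (hα : 0 < α) (k : ℕ) :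
    Summable (fun j : ℕ => ((j:ℝ)+(k:ℝ)+1) ^ (-(1+α))) := by
  have base : Summable (fun n : ℕ => ((n:ℝ)) ^ (-(1+α))) :=
    Real.summable_nat_rpow.2 (by linarith)
  have h2 : Summable (fun n : ℕ => (((n+(k+1):ℕ)):ℝ) ^ (-(1+α))) :=
    (summable_nat_add_iff (f := fun n : ℕ => ((n:ℝ)) ^ (-(1+α))) (k+1)).2 base
  refine h2.congr (fun j => ?_)
  congr 1
  push_cast
  ring

lemma tsum_tail_bound (α : ℝ) (hα : 0 < α) (k : ℕ) :
    ∑' j : ℕ, ((j:ℝ)+(k:ℝ)+1) ^ (-(1+α)) ≤ ((k:ℝ)+1)^(-α) * (1 + 1/α) := by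
  have hsum := summable_shift α hα k
  have hk1 : (1:ℝ) ≤ (k:ℝ)+1 := le_add_of_nonneg_left (Nat.cast_nonneg k)
  rw [Summable.tsum_eq_zero_add hsum]
  have hfirst : ((0:ℕ):ℝ)+(k:ℝ)+1 = (k:ℝ)+1 := by norm_num
  have h0 : (((0:ℕ):ℝ)+(k:ℝ)+1) ^ (-(1+α)) ≤ ((k:ℝ)+1)^(-α) := by
    rw [hfirst]
    exact Real.rpow_le_rpow_of_exponent_le hk1 (by linarith)
  have hrest : ∑' j : ℕ, (((j+1:ℕ):ℝ)+(k:ℝ)+1) ^ (-(1+α)) ≤ ((k:ℝ)+1)^(-α) / α := by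
    apply Real.tsum_le_of_sum_range_le
    · intro n; positivity
    · intro n
      rw [le_div_iff₀ hα, mul_comm, Finset.mul_sum]
      set f : ℕ → ℝ := fun j => ((j:ℝ)+(k:ℝ)+1)^(-α) with hf
      have step : ∀ j ∈ Finset.range n,
          α * ((((j+1:ℕ)):ℝ)+(k:ℝ)+1) ^ (-(1+α)) ≤ f j - f (j+1) := by
        intro j _
        have hx : (0:ℝ) < (j:ℝ)+(k:ℝ)+1 := by positivity
        have := key_ineq hα hx
        have harr : (((j+1:ℕ)):ℝ)+(k:ℝ)+1 = ((j:ℝ)+(k:ℝ)+1)+1 := by push_cast; ring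
        have harr2 : (((j+1:ℕ)):ℝ)+(k:ℝ)+1 = ((j+1:ℕ):ℝ)+(k:ℝ)+1 := rfl
        rw [hf]
        simp only []
        rw [harr]
        push_cast
        convert this using 2 <;> push_cast <;> ring
      calc ∑ j ∈ Finset.range n, α * ((((j+1:ℕ)):ℝ)+(k:ℝ)+1) ^ (-(1+α))
          ≤ ∑ j ∈ Finset.range n, (f j - f (j+1)) := Finset.sum_le_sum step
        _ = f 0 - f n := Finset.sum_range_sub' f n
        _ ≤ f 0 := by
            have : 0 ≤ f n := by rw [hf]; positivity
            linarith
        _ = ((k:ℝ)+1)^(-α) := by rw [hf]; norm_num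
  calc (((0:ℕ):ℝ)+(k:ℝ)+1) ^ (-(1+α)) + ∑' j : ℕ, (((j+1:ℕ):ℝ)+(k:ℝ)+1) ^ (-(1+α))
      ≤ ((k:ℝ)+1)^(-α) + ((k:ℝ)+1)^(-α) / α := add_le_add h0 hrest
    _ = ((k:ℝ)+1)^(-α) * (1 + 1/α) := by ring

lemma term_bound (α β : ℝ) (hα : 0 < α) (hβ : 0 ≤ β) (k j : ℕ) :
    Mab α β (k+1) / Mab α β k *
      (Mab α β (j+k) / (((j:ℝ)+(k:ℝ)+1) * Mab α β (j+k+1)))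
    ≤ (Real.exp β * 2^β * ((k:ℝ)+1)^α) * ((j:ℝ)+(k:ℝ)+1)^(-(1+α)) := by
  set m := j + k with hm
  have hc : (j:ℝ)+(k:ℝ)+1 = (m:ℝ)+1 := by rw [hm]; push_cast; ring
  rw [hc]
  have hrho := rho_le α β hβ k
  have ha := a_le α β hα.le hβ m
  have hanon : 0 ≤ Mab α β m / (((m:ℝ)+1) * Mab α β (m+1)) := by
    have := Mab_pos α β m; have := Mab_pos α β (m+1); positivity
  have hrhonon : 0 ≤ Mab α β (k+1) / Mab α β k := by
    have := Mab_pos α β k; have := Mab_pos α β (k+1); positivity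
  have hRnon : (0:ℝ) ≤ Real.exp β * (((k:ℝ)+1)^α * Lg (k+1) ^ β) := by
    have := Lg_pos (k+1); positivity
  have step1 : Mab α β (k+1) / Mab α β k *
      (Mab α β m / (((m:ℝ)+1) * Mab α β (m+1)))
      ≤ (Real.exp β * (((k:ℝ)+1)^α * Lg (k+1) ^ β)) * (((m:ℝ)+1)^(-(1+α)) / Lg m ^ β) :=
    mul_le_mul hrho ha hanon hRnon
  refine le_trans step1 ?_
  have hLm : 0 < Lg m ^ β := Real.rpow_pos_of_pos (Lg_pos m) β
  have hdiv : Lg (k+1) ^ β / Lg m ^ β ≤ 2^β := by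
    rw [div_le_iff₀ hLm, ← Real.mul_rpow (by norm_num) (Lg_pos m).le]
    apply Real.rpow_le_rpow (Lg_pos (k+1)).le _ hβ
    calc Lg (k+1) ≤ Lg (m+1) := Lg_mono (by omega)
      _ ≤ 2 * Lg m := Lg_succ_le_two m
  have hrw : (Real.exp β * (((k:ℝ)+1)^α * Lg (k+1) ^ β)) * (((m:ℝ)+1)^(-(1+α)) / Lg m ^ β)
      = (Real.exp β * ((k:ℝ)+1)^α * ((m:ℝ)+1)^(-(1+α))) * (Lg (k+1) ^ β / Lg m ^ β) := by
    field_simp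
  rw [hrw]
  have hpos : (0:ℝ) ≤ Real.exp β * ((k:ℝ)+1)^α * ((m:ℝ)+1)^(-(1+α)) := by positivity
  calc (Real.exp β * ((k:ℝ)+1)^α * ((m:ℝ)+1)^(-(1+α))) * (Lg (k+1) ^ β / Lg m ^ β)
      ≤ (Real.exp β * ((k:ℝ)+1)^α * ((m:ℝ)+1)^(-(1+α))) * 2^β :=
        mul_le_mul_of_nonneg_left hdiv hpos
    _ = (Real.exp β * 2^β * ((k:ℝ)+1)^α) * ((m:ℝ)+1)^(-(1+α)) := by ring

lemma backward (α β : ℝ) (hα : 0 < α) (hβ : 0 ≤ β) :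
    Summable (fun j : ℕ => Mab α β j / (((j:ℝ)+1) * Mab α β (j+1))) ∧
      ∃ A : ℝ, ∀ k : ℕ,
        Mab α β (k+1) / Mab α β k *
          ∑' j : ℕ, Mab α β (j+k) / (((j:ℝ)+(k:ℝ)+1) * Mab α β (j+k+1)) ≤ A := by
  have hSa : Summable (fun j : ℕ => Mab α β j / (((j:ℝ)+1) * Mab α β (j+1))) := by
    have hbig : Summable (fun j : ℕ => ((j:ℝ)+1) ^ (-(1+α))) := by
      refine (summable_shift α hα 0).congr (fun j => ?_)
      norm_num
    apply Summable.of_nonneg_of_le _ _ hbig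
    · intro j
      have := Mab_pos α β j; have := Mab_pos α β (j+1); positivity
    · intro j
      refine le_trans (a_le α β hα.le hβ j) ?_
      have h1 : (1:ℝ) ≤ Lg j ^ β := Real.one_le_rpow (one_le_Lg j) hβ
      have h2 : (0:ℝ) ≤ ((j:ℝ)+1) ^ (-(1+α)) := by positivity
      exact div_le_self h2 h1
  refine ⟨hSa, Real.exp β * 2^β * (1 + 1/α), fun k => ?_⟩
  set ρ := Mab α β (k+1) / Mab α β k with hρ
  have hSshift : Summable (fun j : ℕ => Mab α β (j+k) / (((j:ℝ)+(k:ℝ)+1) * Mab α β (j+k+1))) := by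
    refine ((summable_nat_add_iff (f := fun j : ℕ => Mab α β j / (((j:ℝ)+1) * Mab α β (j+1))) k).2 hSa).congr (fun j => ?_)
    push_cast
    ring_nf
  have hsum1 : Summable (fun j : ℕ => ρ * (Mab α β (j+k) / (((j:ℝ)+(k:ℝ)+1) * Mab α β (j+k+1)))) :=
    hSshift.mul_left ρ
  have hsum2 : Summable (fun j : ℕ =>
      (Real.exp β * 2^β * ((k:ℝ)+1)^α) * ((j:ℝ)+(k:ℝ)+1)^(-(1+α))) :=
    (summable_shift α hα k).mul_left _
  rw [← tsum_mul_left]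
  calc ∑' j : ℕ, ρ * (Mab α β (j+k) / (((j:ℝ)+(k:ℝ)+1) * Mab α β (j+k+1)))
      ≤ ∑' j : ℕ, (Real.exp β * 2^β * ((k:ℝ)+1)^α) * ((j:ℝ)+(k:ℝ)+1)^(-(1+α)) :=
        Summable.tsum_le_tsum (fun j => term_bound α β hα hβ k j) hsum1 hsum2
    _ = (Real.exp β * 2^β * ((k:ℝ)+1)^α) * ∑' j : ℕ, ((j:ℝ)+(k:ℝ)+1)^(-(1+α)) :=
        tsum_mul_left
    _ ≤ (Real.exp β * 2^β * ((k:ℝ)+1)^α) * (((k:ℝ)+1)^(-α) * (1 + 1/α)) := by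
        apply mul_le_mul_of_nonneg_left (tsum_tail_bound α hα k) (by positivity)
    _ = (Real.exp β * 2^β * (1 + 1/α)) * (((k:ℝ)+1)^α * ((k:ℝ)+1)^(-α)) := by ring
    _ = Real.exp β * 2^β * (1 + 1/α) := by
        rw [mul_comm (((k:ℝ)+1)^α), rpow_cancel k α, mul_one]

lemma forward_beta0 (hs : Summable (fun j : ℕ => Mab 0 0 j / (((j:ℝ)+1) * Mab 0 0 (j+1)))) :
    False := by
  have hM : ∀ j : ℕ, Mab 0 0 j = 1 := by
    intro j
    unfold Mab
    rw [Real.rpow_zero, zero_mul, Real.rpow_zero, mul_one]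
  have h1 : Summable (fun j : ℕ => 1/((j:ℝ)+1)) := by
    refine hs.congr (fun j => ?_)
    rw [hM j, hM (j+1), mul_one]
  have h2 : Summable (fun n : ℕ => 1/((n:ℝ))) := by
    apply (summable_nat_add_iff (f := fun n : ℕ => 1/((n:ℝ))) 1).1
    refine h1.congr (fun j => ?_)
    push_cast
    ring
  exact Real.not_summable_one_div_natCast h2

lemma forward_betapos (β : ℝ) (hβ : 0 < β)
    (hs : Summable (fun j : ℕ => Mab 0 β j / (((j:ℝ)+1) * Mab 0 β (j+1))))
    (A : ℝ)
    (hA : ∀ k : ℕ, Mab 0 β (k+1) / Mab 0 β k *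
          ∑' j : ℕ, Mab 0 β (j+k) / (((j:ℝ)+(k:ℝ)+1) * Mab 0 β (j+k+1)) ≤ A) :
    False := by
  set c : ℝ := Real.exp (-β) / 2^β with hc
  have h2β : (0:ℝ) < (2:ℝ)^β := Real.rpow_pos_of_pos two_pos β
  have hcpos : 0 < c := by rw [hc]; positivity
  have claim : ∀ k : ℕ, c * Real.log ((k:ℝ)+1) ≤ A := by
    intro k
    set n : ℕ := (k+2)^2 with hn
    have hLgβ : (0:ℝ) < Lg k ^ β := Real.rpow_pos_of_pos (Lg_pos k) β
    -- shifted summability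
    have hSshift : Summable (fun j : ℕ => Mab 0 β (j+k) / (((j:ℝ)+(k:ℝ)+1) * Mab 0 β (j+k+1))) := by
      refine ((summable_nat_add_iff
        (f := fun j : ℕ => Mab 0 β j / (((j:ℝ)+1) * Mab 0 β (j+1))) k).2 hs).congr (fun j => ?_)
      push_cast
      ring_nf
    have hanonneg : ∀ j : ℕ, 0 ≤ Mab 0 β (j+k) / (((j:ℝ)+(k:ℝ)+1) * Mab 0 β (j+k+1)) := by
      intro j
      have := Mab_pos 0 β (j+k); have := Mab_pos 0 β (j+k+1); positivity
    -- termwise lower bound on range n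
    have hterm : ∀ j ∈ Finset.range n,
        c / Lg k ^ β * (1/((j:ℝ)+(k:ℝ)+1))
          ≤ Mab 0 β (j+k) / (((j:ℝ)+(k:ℝ)+1) * Mab 0 β (j+k+1)) := by
      intro j hj
      have hjn : (j:ℝ) ≤ (k:ℝ)^2 + 4*(k:ℝ) + 3 := by
        have : j ≤ k^2 + 4*k + 3 := by
          have h1 := Finset.mem_range.1 hj
          have h2 : (k+2)^2 = k^2+4*k+4 := by ring
          omega
        calc (j:ℝ) ≤ ((k^2+4*k+3 : ℕ):ℝ) := Nat.cast_le.2 this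
          _ = (k:ℝ)^2 + 4*(k:ℝ) + 3 := by push_cast; ring
      have hX : (0:ℝ) < (j:ℝ)+(k:ℝ)+1 := by positivity
      have hLgb : Lg (j+k+1) ≤ 2 * Lg k := by
        have h2 : ((j+k+1:ℕ):ℝ) + Real.exp 1 ≤ ((k:ℝ) + Real.exp 1)^2 := by
          have he := Real.exp_one_gt_d9
          have hek : 0 ≤ (Real.exp 1 - 2.7) * (k:ℝ) :=
            mul_nonneg (by linarith) (Nat.cast_nonneg k)
          push_cast
          nlinarith [(Nat.cast_nonneg k : (0:ℝ) ≤ (k:ℝ))]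
        calc Lg (j+k+1) ≤ Real.log (((k:ℝ) + Real.exp 1)^2) :=
              Real.log_le_log (by positivity) h2
          _ = 2 * Real.log ((k:ℝ) + Real.exp 1) := by
              rw [Real.log_pow]; norm_num
          _ = 2 * Lg k := rfl
      have hpow : Lg (j+k+1) ^ β ≤ 2^β * Lg k ^ β := by
        rw [← Real.mul_rpow (by norm_num) (Lg_pos k).le]
        exact Real.rpow_le_rpow (Lg_pos _).le hLgb hβ.le
      have hge := a_ge β hβ.le (j+k)
      have hcast : ((j+k:ℕ):ℝ)+1 = (j:ℝ)+(k:ℝ)+1 := by push_cast; ring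
      rw [hcast] at hge
      have hLgpos : (0:ℝ) < Lg (j+k+1) ^ β := Real.rpow_pos_of_pos (Lg_pos _) β
      have h3 : c / Lg k ^ β * (1/((j:ℝ)+(k:ℝ)+1))
          = Real.exp (-β) / (((j:ℝ)+(k:ℝ)+1) * (2^β * Lg k ^ β)) := by
        rw [hc]; field_simp
      rw [h3]
      refine le_trans ?_ hge
      apply div_le_div_of_nonneg_left (Real.exp_pos (-β)).le (by positivity)
      exact mul_le_mul_of_nonneg_left hpow hX.le
    -- telescoping harmonic lower bound
    have hH : Real.log ((k:ℝ)+1) ≤ ∑ j ∈ Finset.range n, 1/((j:ℝ)+(k:ℝ)+1) := by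
      set f : ℕ → ℝ := fun i => Real.log ((i:ℝ)+(k:ℝ)+1) with hf
      have htel := Finset.sum_range_sub f n
      have hstep : ∀ j ∈ Finset.range n, f (j+1) - f j ≤ 1/((j:ℝ)+(k:ℝ)+1) := by
        intro j _
        have hx : (0:ℝ) < (j:ℝ)+(k:ℝ)+1 := by positivity
        have hcast : ((j+1:ℕ):ℝ)+(k:ℝ)+1 = ((j:ℝ)+(k:ℝ)+1) + 1 := by push_cast; ring
        rw [hf]
        simp only []
        rw [hcast]
        set x : ℝ := (j:ℝ)+(k:ℝ)+1
        have hlog := Real.log_le_sub_one_of_pos (show (0:ℝ) < (x+1)/x by positivity)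
        rw [Real.log_div (by positivity) (ne_of_gt hx)] at hlog
        have : (x+1)/x - 1 = 1/x := by field_simp; ring
        linarith
      have hsum := Finset.sum_le_sum hstep
      rw [htel] at hsum
      have hf0 : f 0 = Real.log ((k:ℝ)+1) := by rw [hf]; norm_num
      have hfn : 2 * Real.log ((k:ℝ)+1) ≤ f n := by
        rw [hf]
        have h1 : ((k:ℝ)+1)^(2:ℕ) ≤ (n:ℝ)+(k:ℝ)+1 := by
          rw [hn]; push_cast; nlinarith [(Nat.cast_nonneg k : (0:ℝ) ≤ (k:ℝ))]
        calc 2 * Real.log ((k:ℝ)+1) = Real.log (((k:ℝ)+1)^(2:ℕ)) := by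
              rw [Real.log_pow]; norm_num
          _ ≤ Real.log ((n:ℝ)+(k:ℝ)+1) := Real.log_le_log (by positivity) h1
      rw [hf0] at hsum
      linarith [hsum, hfn]
    -- assemble
    have hρpos : 0 ≤ Mab 0 β (k+1) / Mab 0 β k := by
      have := Mab_pos 0 β k; have := Mab_pos 0 β (k+1); positivity
    have hρ := rho_ge β hβ.le k
    have hS : c / Lg k ^ β * ∑ j ∈ Finset.range n, 1/((j:ℝ)+(k:ℝ)+1)
        ≤ ∑ j ∈ Finset.range n, Mab 0 β (j+k) / (((j:ℝ)+(k:ℝ)+1) * Mab 0 β (j+k+1)) := by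
      rw [Finset.mul_sum]
      exact Finset.sum_le_sum hterm
    have hST : ∑ j ∈ Finset.range n, Mab 0 β (j+k) / (((j:ℝ)+(k:ℝ)+1) * Mab 0 β (j+k+1))
        ≤ ∑' j : ℕ, Mab 0 β (j+k) / (((j:ℝ)+(k:ℝ)+1) * Mab 0 β (j+k+1)) :=
      Summable.sum_le_tsum (Finset.range n) (fun i _ => hanonneg i) hSshift
    have hSnonneg : 0 ≤ ∑ j ∈ Finset.range n, Mab 0 β (j+k) / (((j:ℝ)+(k:ℝ)+1) * Mab 0 β (j+k+1)) :=
      Finset.sum_nonneg (fun i _ => hanonneg i)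
    have hHnonneg : 0 ≤ ∑ j ∈ Finset.range n, 1/((j:ℝ)+(k:ℝ)+1) := by
      apply Finset.sum_nonneg; intro i _; positivity
    calc c * Real.log ((k:ℝ)+1)
        ≤ c * ∑ j ∈ Finset.range n, 1/((j:ℝ)+(k:ℝ)+1) :=
          mul_le_mul_of_nonneg_left hH hcpos.le
      _ = Lg k ^ β * (c / Lg k ^ β * ∑ j ∈ Finset.range n, 1/((j:ℝ)+(k:ℝ)+1)) := by
          field_simp
      _ ≤ Lg k ^ β * ∑ j ∈ Finset.range n, Mab 0 β (j+k) / (((j:ℝ)+(k:ℝ)+1) * Mab 0 β (j+k+1)) :=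
          mul_le_mul_of_nonneg_left hS hLgβ.le
      _ ≤ (Mab 0 β (k+1) / Mab 0 β k) *
            ∑' j : ℕ, Mab 0 β (j+k) / (((j:ℝ)+(k:ℝ)+1) * Mab 0 β (j+k+1)) :=
          mul_le_mul hρ hST hSnonneg hρpos
      _ ≤ A := hA k
  -- contradiction: choose k large
  obtain ⟨k, hk⟩ := exists_nat_gt (Real.exp (A / c))
  have hk1 : Real.exp (A / c) < (k:ℝ) + 1 := by linarith
  have hlog : A / c < Real.log ((k:ℝ)+1) :=
    (Real.lt_log_iff_exp_lt (by positivity)).2 hk1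
  have := claim k
  have h2 : A < c * Real.log ((k:ℝ)+1) := by
    have := mul_lt_mul_of_pos_left hlog hcpos
    rwa [mul_div_cancel₀ A (ne_of_gt hcpos)] at this
  linarith

/-- The sequence `M_j = (j!)^α·(ln(j+e))^{βj}` is strongly non-quasianalytic
(the tail sums are finite and `sup_k (M_{k+1}/M_k)·∑_{j≥k} M_j/((j+1)M_{j+1}) < ∞`)
if and only if `α > 0`; in particular the Gevrey sequences `(j!)^α`, `α > 0`
(the case `β = 0`), are strongly non-quasianalytic. -/
theorem Mab_strongly_nonquasianalytic_iff (α β : ℝ) (hα : 0 ≤ α) (hβ : 0 ≤ β) :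
    (Summable (fun j : ℕ => Mab α β j / (((j:ℝ)+1) * Mab α β (j+1))) ∧
      ∃ A : ℝ, ∀ k : ℕ,
        Mab α β (k+1) / Mab α β k *
          ∑' j : ℕ, Mab α β (j+k) / (((j:ℝ)+(k:ℝ)+1) * Mab α β (j+k+1)) ≤ A)
    ↔ 0 < α := by
  constructor
  · rintro ⟨hsum, A, hA⟩
    by_contra h0
    have hα0 : α = 0 := le_antisymm (not_lt.1 h0) hα
    subst hα0
    rcases eq_or_lt_of_le hβ with hβ0 | hβpos
    · subst hβ0
      exact forward_beta0 hsum
    · exact forward_betapos β hβpos hsum A hA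
  · intro hpos
    exact backward α β hpos hβ
end
end

section
/- For λ > 0, let M^λ_j = exp(λ·j²/4) and let G_λ(z) = exp(−(Log z)²/λ), where Log is the principal branch of the logarithm on ℂ \ (−∞,0]. Then there exists γ_0 > 0 such that for every γ with 0 < γ ≤ γ_0 and every r with 0 < r ≤ 1: G_λ ∈ A_{M^λ}(S_{γ,r}), G_λ is flat on S_{γ,r}, and for every μ with 0 < μ < λ, G_λ ∉ A_{M^μ}(S_{γ,r}). In particular, taking h = G_{2λ}, which satisfies h(z)² = G_λ(z), shows that the conclusion of the ultraholomorphic smooth-roots theorem fails for the (non–moderate-growth) sequences M^λ. -/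
open Set Filter Topology Complex ENNReal

noncomputable section

/-- The sector `S_{γ,r}` of the complex plane: `0 < |z| < r`, `|arg z| < γπ/2`. -/
def Sector (γ : ℝ) (r : ℝ≥0∞) : Set ℂ :=
  {z : ℂ | z ≠ 0 ∧ |Complex.arg z| < γ * Real.pi / 2 ∧ (‖z‖₊ : ℝ≥0∞) < r}

/-- `f ∈ A^∞(S_{γ,r})`: `f` is holomorphic on the sector and all its derivatives
are bounded there. -/
def AInfty (γ : ℝ) (r : ℝ≥0∞) (f : ℂ → ℂ) : Prop :=
  DifferentiableOn ℂ f (Sector γ r) ∧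
  ∀ j : ℕ, ∃ B : ℝ, ∀ z ∈ Sector γ r, ‖iteratedDeriv j f z‖ ≤ B

/-- `f ∈ A_M(S_{γ,r})`: `f ∈ A^∞(S_{γ,r})` with Denjoy–Carleman bounds. -/
def AClass (M : ℕ → ℝ) (γ : ℝ) (r : ℝ≥0∞) (f : ℂ → ℂ) : Prop :=
  AInfty γ r f ∧
  ∃ C > (0:ℝ), ∃ σ > (0:ℝ), ∀ (j : ℕ), ∀ z ∈ Sector γ r,
    ‖iteratedDeriv j f z‖ ≤ C * σ ^ j * (Nat.factorial j : ℝ) * M j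

/-- `f` is flat on `S_{γ,r}`: every derivative tends to `0` at the vertex. -/
def FlatOn (γ : ℝ) (r : ℝ≥0∞) (f : ℂ → ℂ) : Prop :=
  ∀ j : ℕ, Tendsto (iteratedDeriv j f) (𝓝[Sector γ r] 0) (𝓝 0)

/-- The function `h_M` associated with the sequence `M`. -/
def hFun (M : ℕ → ℝ) (t : ℝ) : ℝ := if t = 0 then 0 else ⨅ j : ℕ, t ^ j * M j

/-- The sequence `M^λ_j = exp(λ j²/4)`. -/
def Mlam (lam : ℝ) : ℕ → ℝ := fun j => Real.exp (lam * (j:ℝ) ^ 2 / 4)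

/-- The function `G_λ(z) = exp(−(Log z)²/λ)`, with the principal logarithm. -/
def Gfun (lam : ℝ) : ℂ → ℂ := fun z => Complex.exp (-(Complex.log z) ^ 2 / lam)

/- ===== auxiliary lemmas ===== -/

lemma cauchyBound {f : ℂ → ℂ} {c : ℂ} {R : ℝ} (hR : 0 < R)
    (hf : DifferentiableOn ℂ f (Metric.closedBall c R)) {B : ℝ}
    (hB : ∀ w ∈ Metric.closedBall c R, ‖f w‖ ≤ B) (n : ℕ) :
    ‖iteratedDeriv n f c‖ ≤ (n.factorial : ℝ) * B / R ^ n := by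
  lift R to NNReal using hR.le with R'
  have hR' : (0 : NNReal) < R' := by exact_mod_cast hR
  have h := hf.hasFPowerSeriesOnBall hR'
  have hiter : iteratedDeriv n f c
      = n.factorial • (cauchyPowerSeries f c R' n fun _ => (1:ℂ)) := by
    rw [iteratedDeriv_eq_iteratedFDeriv, ← h.factorial_smul (1:ℂ) n]
  have hBnn : 0 ≤ B := le_trans (norm_nonneg _) (hB c (Metric.mem_closedBall_self hR.le))
  have hint : (∫ θ : ℝ in (0)..2 * Real.pi, ‖f (circleMap c R' θ)‖) ≤ 2 * Real.pi * B := by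
    have hcont : ContinuousOn (fun θ : ℝ => ‖f (circleMap c R' θ)‖) (Set.uIcc 0 (2*Real.pi)) := by
      apply ContinuousOn.norm
      apply hf.continuousOn.comp (continuous_circleMap c R').continuousOn
      intro θ _
      simpa using Metric.sphere_subset_closedBall (circleMap_mem_sphere c hR.le θ)
    calc (∫ θ : ℝ in (0)..2 * Real.pi, ‖f (circleMap c R' θ)‖)
        ≤ ∫ _ : ℝ in (0)..2 * Real.pi, B := by
          apply intervalIntegral.integral_mono_on Real.two_pi_pos.le
            (hcont.intervalIntegrable) intervalIntegrable_const
          intro θ _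
          exact hB _ (Metric.sphere_subset_closedBall (circleMap_mem_sphere c hR.le θ))
      _ = 2 * Real.pi * B := by simp [mul_comm]
  have hcoef : ‖cauchyPowerSeries f c R' n fun _ => (1:ℂ)‖ ≤ B * (R':ℝ)⁻¹ ^ n := by
    calc ‖cauchyPowerSeries f c R' n fun _ => (1:ℂ)‖
        ≤ ‖cauchyPowerSeries f c R' n‖ * ∏ _i : Fin n, ‖(1:ℂ)‖ :=
          (cauchyPowerSeries f c R' n).le_opNorm _
      _ = ‖cauchyPowerSeries f c R' n‖ := by simp
      _ ≤ ((2 * Real.pi)⁻¹ * ∫ θ : ℝ in (0)..2 * Real.pi, ‖f (circleMap c R' θ)‖) * |(R':ℝ)|⁻¹ ^ n :=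
          norm_cauchyPowerSeries_le f c R' n
      _ ≤ ((2 * Real.pi)⁻¹ * (2 * Real.pi * B)) * |(R':ℝ)|⁻¹ ^ n := by
          gcongr
      _ = B * (R':ℝ)⁻¹ ^ n := by
          rw [_root_.abs_of_nonneg (R'.coe_nonneg)]
          field_simp
  rw [hiter]
  have : ‖n.factorial • (cauchyPowerSeries f c R' n fun _ => (1:ℂ))‖
      = (n.factorial : ℝ) * ‖cauchyPowerSeries f c R' n fun _ => (1:ℂ)‖ := by
    rw [nsmul_eq_mul, norm_mul]
    simp
  rw [this, div_eq_mul_inv, ← inv_pow, mul_assoc]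
  gcongr

lemma norm_Gfun {lam : ℝ} {z : ℂ} :
    ‖Gfun lam z‖ = Real.exp (((Complex.arg z)^2 - (Real.log (‖z‖))^2) / lam) := by
  rw [Gfun, Complex.norm_exp]
  congr 1
  rw [Complex.div_ofReal_re]
  congr 1
  rw [Complex.neg_re, sq, Complex.mul_re, Complex.log_re, Complex.log_im]
  ring

lemma diffG (lam : ℝ) : DifferentiableOn ℂ (Gfun lam) Complex.slitPlane := by
  intro z hz
  exact ((((Complex.differentiableAt_log hz).pow 2).neg.div_const _).cexp).differentiableWithinAt

lemma analytic_iter (lam : ℝ) (j : ℕ) :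
    AnalyticOnNhd ℂ (iteratedDeriv j (Gfun lam)) Complex.slitPlane := by
  induction j with
  | zero => simpa using (diffG lam).analyticOnNhd Complex.isOpen_slitPlane
  | succ j ih => rw [iteratedDeriv_succ]; exact ih.deriv

lemma master {lam : ℝ} (hlam : 0 < lam) (j : ℕ) {z : ℂ}
    (hz : z ≠ 0) (harg : |Complex.arg z| ≤ Real.pi/4) (habs : ‖z‖ ≤ 1) :
    ‖iteratedDeriv j (Gfun lam) z‖ ≤
      (j.factorial : ℝ) * 2 ^ j * Real.exp (Real.pi^2/(4*lam)) *
        Real.exp (((j:ℝ) + 2*Real.log 2/lam) * (-Real.log (‖z‖))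
                  - (Real.log (‖z‖))^2/lam) := by
  set t := ‖z‖ with ht_def
  have ht : 0 < t := by simpa [ht_def] using norm_pos_iff.mpr hz
  set s : ℝ := -Real.log t with hs_def
  have hs : 0 ≤ s := by
    simp only [hs_def, neg_nonneg]
    exact Real.log_nonpos ht.le habs
  have hd : (0:ℝ) ≤ Real.log 2 := Real.log_nonneg (by norm_num)
  have hcos : Real.sqrt 2 / 2 * t ≤ z.re := by
    have h1 : Real.cos (Real.pi/4) ≤ Real.cos |z.arg| := by
      apply Real.cos_le_cos_of_nonneg_of_le_pi (abs_nonneg _)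
        (by linarith [Real.pi_pos]) harg
    rw [Real.cos_abs, Real.cos_pi_div_four] at h1
    calc Real.sqrt 2 / 2 * t ≤ Real.cos z.arg * t := by
          apply mul_le_mul_of_nonneg_right h1 ht.le
      _ = z.re := by rw [mul_comm]; exact Complex.norm_mul_cos_arg z
  have hsqrt2 : (1:ℝ) < Real.sqrt 2 := by
    nlinarith [Real.sq_sqrt (show (0:ℝ) ≤ 2 by norm_num), Real.sqrt_nonneg 2]
  have key : ∀ w ∈ Metric.closedBall z (t/2),
      0 < w.re ∧ t/2 ≤ ‖w‖ ∧ ‖w‖ ≤ 3*t/2 := by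
    intro w hw
    rw [Metric.mem_closedBall, Complex.dist_eq] at hw
    have hre : |(w - z).re| ≤ t/2 := le_trans (Complex.abs_re_le_norm _) hw
    have h1 : 0 < w.re := by
      have : z.re - t/2 ≤ w.re := by
        have := neg_le_of_abs_le hre
        simp only [Complex.sub_re] at this; linarith
      nlinarith
    have h2 : t/2 ≤ ‖w‖ := by
      have h := norm_add_le (z - w) w
      rw [sub_add_cancel] at h
      have hwz : ‖w - z‖ = ‖z - w‖ := norm_sub_rev _ _
      linarith
    have h3 : ‖w‖ ≤ 3*t/2 := by
      have h := norm_add_le (w - z) z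
      rw [sub_add_cancel] at h
      linarith
    exact ⟨h1, h2, h3⟩
  set B : ℝ := Real.exp ((Real.pi^2/4 + 2*Real.log 2 * s - s^2) / lam) with hB_def
  have hball : ∀ w ∈ Metric.closedBall z (t/2), ‖Gfun lam w‖ ≤ B := by
    intro w hw
    obtain ⟨h1, h2, h3⟩ := key w hw
    rw [norm_Gfun, hB_def, Real.exp_le_exp]
    apply div_le_div_of_nonneg_right ?_ hlam.le
    have hargw : (Complex.arg w)^2 ≤ Real.pi^2/4 := by
      have : |Complex.arg w| < Real.pi/2 := Complex.abs_arg_lt_pi_div_two_iff.mpr (Or.inl h1)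
      have h' := abs_lt.mp this
      nlinarith [h'.1, h'.2]
    have hlogw : s^2 - 2*Real.log 2 * s ≤ (Real.log (‖w‖))^2 := by
      set L := Real.log (‖w‖) with hL
      have habsw : 0 < ‖w‖ := lt_of_lt_of_le (by positivity) h2
      have hlo : Real.log t - Real.log 2 ≤ L := by
        rw [hL, ← Real.log_div ht.ne' two_ne_zero]
        exact Real.log_le_log (by positivity) h2
      have hhi : L ≤ Real.log t + Real.log 2 := by
        have : Real.log (3*t/2) ≤ Real.log t + Real.log 2 := by
          rw [show 3*t/2 = t * (3/2) by ring, Real.log_mul ht.ne' (by norm_num)]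
          have : Real.log (3/2) ≤ Real.log 2 := Real.log_le_log (by norm_num) (by norm_num)
          linarith
        exact le_trans (Real.log_le_log habsw h3) this
      have hLs : (L + s)^2 ≤ (Real.log 2)^2 := by
        rw [hs_def]
        have h1' : -(Real.log 2) ≤ L - Real.log t := by linarith
        have h2' : L - Real.log t ≤ Real.log 2 := by linarith
        nlinarith
      nlinarith [sq_nonneg (L + s), mul_nonneg hs hd]
    nlinarith
  have hdiff : DifferentiableOn ℂ (Gfun lam) (Metric.closedBall z (t/2)) := by
    apply (diffG lam).mono
    intro w hw
    exact Complex.mem_slitPlane_iff.mpr (Or.inl (key w hw).1)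
  have hC := cauchyBound (by positivity : (0:ℝ) < t/2) hdiff hball j
  refine hC.trans_eq ?_
  have htexp : t = Real.exp (-s) := by rw [hs_def, neg_neg, Real.exp_log ht]
  rw [hB_def, htexp, Real.log_exp]
  have expsplit : Real.exp ((Real.pi^2/4 + 2*Real.log 2*s - s^2)/lam)
      = Real.exp (Real.pi^2/(4*lam)) * Real.exp (((j:ℝ) + 2*Real.log 2/lam)*s - s^2/lam)
        * Real.exp ((j:ℝ)*(-s)) := by
    rw [← Real.exp_add, ← Real.exp_add]
    congr 1
    field_simp
    ring
  rw [expsplit, div_pow, ← Real.exp_nat_mul]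
  have hE : Real.exp ((j:ℝ)*(-s)) ≠ 0 := Real.exp_ne_zero _
  field_simp

lemma sector_facts {γ : ℝ} (hγ2 : γ ≤ 1/2) {r : ℝ≥0∞} (hr1 : r ≤ 1) {z : ℂ}
    (hz : z ∈ Sector γ r) :
    z ≠ 0 ∧ |Complex.arg z| ≤ Real.pi/4 ∧ ‖z‖ ≤ 1 := by
  obtain ⟨h0, ha, hn⟩ := hz
  refine ⟨h0, ?_, ?_⟩
  · have : γ * Real.pi / 2 ≤ Real.pi / 4 := by nlinarith [Real.pi_pos]
    linarith
  · have h1 : (‖z‖₊ : ℝ≥0∞) < 1 := lt_of_lt_of_le hn hr1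
    have h2 : ‖z‖₊ < 1 := by exact_mod_cast h1
    have : ‖z‖ ≤ 1 := by
      have := h2.le
      exact_mod_cast this
    simpa using this

lemma exp_quad_le {lam : ℝ} (hlam : 0 < lam) (a s : ℝ) :
    Real.exp (a * s - s^2/lam) ≤ Real.exp (lam * a^2 / 4) := by
  rw [Real.exp_le_exp]
  have h1 : a*s - lam*a^2/4 ≤ s^2/lam := by
    rw [le_div_iff₀ hlam]
    nlinarith [sq_nonneg (lam*a - 2*s)]
  linarith

lemma master2 {lam : ℝ} (hlam : 0 < lam) (j : ℕ) {z : ℂ}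
    (hz : z ≠ 0) (harg : |Complex.arg z| ≤ Real.pi/4) (habs : ‖z‖ ≤ 1) :
    ‖iteratedDeriv j (Gfun lam) z‖ ≤
      (Real.exp (Real.pi^2/(4*lam)) * Real.exp ((Real.log 2)^2/lam)) * 4 ^ j *
        (j.factorial : ℝ) * Mlam lam j := by
  have hM := master hlam j hz harg habs
  refine hM.trans ?_
  set s : ℝ := -Real.log (‖z‖) with hs_def
  set a : ℝ := (j:ℝ) + 2*Real.log 2/lam with ha_def
  rw [show Real.log (‖z‖) ^ 2 = s^2 from by rw [hs_def]; ring]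
  calc (j.factorial : ℝ) * 2 ^ j * Real.exp (Real.pi^2/(4*lam)) * Real.exp (a * s - s^2/lam)
      ≤ (j.factorial : ℝ) * 2 ^ j * Real.exp (Real.pi^2/(4*lam)) * Real.exp (lam * a^2/4) := by
        have h := exp_quad_le hlam a s
        gcongr
    _ = (Real.exp (Real.pi^2/(4*lam)) * Real.exp ((Real.log 2)^2/lam)) * 4 ^ j *
          (j.factorial : ℝ) * Mlam lam j := by
        have hl : lam ≠ 0 := hlam.ne'
        have harith : lam * a^2/4 = lam * (j:ℝ)^2/4 + (j:ℝ)*Real.log 2 + (Real.log 2)^2/lam := by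
          rw [ha_def]
          field_simp
          ring
        rw [harith, Real.exp_add, Real.exp_add, Real.exp_nat_mul, Real.exp_log two_pos, Mlam]
        have h4 : (4:ℝ)^j = 2^j * 2^j := by rw [← mul_pow]; norm_num
        rw [h4]
        ring

lemma sector_subset_slitPlane {γ : ℝ} (hγ2 : γ ≤ 1/2) {r : ℝ≥0∞} (hr1 : r ≤ 1) :
    Sector γ r ⊆ Complex.slitPlane := by
  intro z hz
  obtain ⟨h0, ha, hn⟩ := sector_facts hγ2 hr1 hz
  have : |Complex.arg z| < Real.pi/2 := lt_of_le_of_lt ha (by nlinarith [Real.pi_pos])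
  rcases Complex.abs_arg_lt_pi_div_two_iff.mp this with h | h
  · exact Complex.mem_slitPlane_iff.mpr (Or.inl h)
  · exact absurd h h0

lemma tendsto_S (γ : ℝ) (r : ℝ≥0∞) :
    Tendsto (fun z : ℂ => -Real.log (‖z‖)) (𝓝[Sector γ r] 0) atTop := by
  have h0 : Tendsto (fun z : ℂ => ‖z‖) (𝓝[Sector γ r] 0) (𝓝[>] 0) := by
    rw [tendsto_nhdsWithin_iff]
    constructor
    · have := (continuous_norm.tendsto (0:ℂ))
      simpa using this.mono_left nhdsWithin_le_nhds
    · exact eventually_mem_nhdsWithin.mono fun z hz => norm_pos_iff.mpr hz.1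
  have hlog : Tendsto (fun z : ℂ => Real.log (‖z‖)) (𝓝[Sector γ r] 0) atBot :=
    Real.tendsto_log_nhdsGT_zero.comp h0
  exact tendsto_neg_atBot_atTop.comp hlog

lemma tendsto_exp_quad {lam : ℝ} (hlam : 0 < lam) (a K : ℝ) :
    Tendsto (fun s : ℝ => K * Real.exp (a*s - s^2/lam)) atTop (𝓝 0) := by
  have h1 : Tendsto (fun s : ℝ => a*s - s^2/lam) atTop atBot := by
    have heq : (fun s : ℝ => a*s - s^2/lam) = fun s => s * (a - s * (1/lam)) := by
      funext s; field_simp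
    rw [heq]
    apply Filter.Tendsto.atTop_mul_atBot₀ tendsto_id
    have h2 : Tendsto (fun s : ℝ => s * (1/lam)) atTop atTop :=
      Filter.Tendsto.atTop_mul_const (by positivity) tendsto_id
    have h3 : Tendsto (fun s : ℝ => -(s * (1/lam))) atTop atBot :=
      tendsto_neg_atTop_atBot.comp h2
    have := Filter.tendsto_atBot_add_const_left atTop a h3
    simpa [sub_eq_add_neg] using this
  have h2 := Real.tendsto_exp_atBot.comp h1
  have := h2.const_mul K
  simpa using this

lemma flat_aux {lam γ : ℝ} (hlam : 0 < lam) (hγ2 : γ ≤ 1/2) {r : ℝ≥0∞} (hr1 : r ≤ 1) (j : ℕ) :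
    Tendsto (iteratedDeriv j (Gfun lam)) (𝓝[Sector γ r] 0) (𝓝 0) := by
  apply squeeze_zero_norm'
    (a := fun z : ℂ => ((j.factorial : ℝ) * 2^j * Real.exp (Real.pi^2/(4*lam))) *
      Real.exp (((j:ℝ) + 2*Real.log 2/lam) * (-Real.log (‖z‖))
        - (-Real.log (‖z‖))^2/lam))
  · apply eventually_mem_nhdsWithin.mono
    intro z hz
    obtain ⟨h0, h1, h2⟩ := sector_facts hγ2 hr1 hz
    have := master hlam j h0 h1 h2
    simpa [neg_sq] using this
  · exact (tendsto_exp_quad hlam ((j:ℝ) + 2*Real.log 2/lam)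
      ((j.factorial : ℝ) * 2^j * Real.exp (Real.pi^2/(4*lam)))).comp (tendsto_S γ r)

lemma ofReal_slit {u : ℝ} (hu : 0 < u) : (u:ℂ) ∈ Complex.slitPlane := by
  rw [Complex.mem_slitPlane_iff]
  exact Or.inl (by simpa using hu)

lemma step {lam D r' : ℝ} {m k : ℕ} (hr' : 0 < r') (hD : 0 ≤ D)
    (hflat : Tendsto (fun ε : ℝ => iteratedDeriv m (Gfun lam) (ε:ℂ)) (𝓝[>] (0:ℝ)) (𝓝 0))
    (hbound : ∀ u ∈ Set.Ioo (0:ℝ) r', ‖iteratedDeriv (m+1) (Gfun lam) (u:ℂ)‖ ≤ D * u^k) :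
    ∀ t ∈ Set.Ioo (0:ℝ) r', ‖iteratedDeriv m (Gfun lam) (t:ℂ)‖ ≤ D * t^(k+1) / (k+1) := by
  intro t ht
  set f : ℝ → ℂ := fun x => iteratedDeriv m (Gfun lam) (x:ℂ) with hf_def
  set g : ℝ → ℂ := fun x => iteratedDeriv (m+1) (Gfun lam) (x:ℂ) with hg_def
  have hasD : ∀ u ∈ Set.Ioo (0:ℝ) r', HasDerivAt f (g u) u := by
    intro u hu
    have hus := ofReal_slit hu.1
    have hdiff : DifferentiableAt ℂ (iteratedDeriv m (Gfun lam)) u :=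
      ((analytic_iter lam m) _ hus).differentiableAt
    have h1 : HasDerivAt (iteratedDeriv m (Gfun lam))
        (iteratedDeriv (m+1) (Gfun lam) u) u := by
      rw [iteratedDeriv_succ]
      exact hdiff.hasDerivAt
    exact h1.comp_ofReal
  have key : ∀ ε ∈ Set.Ioo (0:ℝ) t, ‖f t‖ ≤ ‖f ε‖ + D * t^(k+1) / (k+1) := by
    intro ε hε
    have hsub : Set.uIcc ε t ⊆ Set.Ioo (0:ℝ) r' := by
      rw [Set.uIcc_of_le hε.2.le]
      intro x hx
      exact ⟨lt_of_lt_of_le hε.1 hx.1, lt_of_le_of_lt hx.2 ht.2⟩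
    have hgcont : ContinuousOn g (Set.uIcc ε t) := by
      intro x hx
      apply ContinuousAt.continuousWithinAt
      have := ((analytic_iter lam (m+1)) _ (ofReal_slit (hsub hx).1)).continuousAt
      exact this.comp (Complex.continuous_ofReal.continuousAt)
    have hint : IntervalIntegrable g MeasureTheory.volume ε t :=
      hgcont.intervalIntegrable
    have heq := intervalIntegral.integral_eq_sub_of_hasDerivAt
      (fun x hx => hasD x (hsub hx)) hint
    have hft : f t = f ε + ∫ y in ε..t, g y := by rw [heq]; ring
    have hnorm : ‖∫ y in ε..t, g y‖ ≤ D * t^(k+1)/(k+1) := by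
      have h1 : ‖∫ y in ε..t, g y‖ ≤ ∫ y in ε..t, ‖g y‖ :=
        intervalIntegral.norm_integral_le_integral_norm hε.2.le
      have h2 : (∫ y in ε..t, ‖g y‖) ≤ ∫ y in ε..t, D * y^k := by
        apply intervalIntegral.integral_mono_on hε.2.le hint.norm
        · exact (continuousOn_const.mul (continuousOn_pow k)).intervalIntegrable
        · intro x hx
          rw [Set.uIcc_of_le hε.2.le] at hsub
          exact hbound x (hsub hx)
      have h3 : (∫ y in ε..t, D * y^k) = D * ((t^(k+1) - ε^(k+1))/(k+1)) := by
        rw [intervalIntegral.integral_const_mul, integral_pow]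
      have h4 : D * ((t^(k+1) - ε^(k+1))/(k+1)) ≤ D * t^(k+1)/(k+1) := by
        rw [mul_div_assoc]
        apply mul_le_mul_of_nonneg_left ?_ hD
        apply div_le_div_of_nonneg_right ?_ (by positivity)
        nlinarith [pow_nonneg hε.1.le (k+1)]
      linarith
    calc ‖f t‖ = ‖f ε + ∫ y in ε..t, g y‖ := by rw [← hft]
      _ ≤ ‖f ε‖ + ‖∫ y in ε..t, g y‖ := norm_add_le _ _
      _ ≤ ‖f ε‖ + D * t^(k+1)/(k+1) := by linarith
  have hlim : Tendsto (fun ε : ℝ => ‖f ε‖ + D * t^(k+1)/(k+1)) (𝓝[>] (0:ℝ))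
      (𝓝 (0 + D * t^(k+1)/(k+1))) := by
    apply Filter.Tendsto.add ?_ tendsto_const_nhds
    simpa using hflat.norm
  have hev : ∀ᶠ ε in 𝓝[>] (0:ℝ), ‖f t‖ ≤ ‖f ε‖ + D * t^(k+1)/(k+1) := by
    have : Set.Ioo (0:ℝ) t ∈ 𝓝[>] (0:ℝ) := Ioo_mem_nhdsGT_of_mem ⟨le_rfl, ht.1⟩
    exact Filter.eventually_of_mem this fun ε hε => key ε hε
  have := ge_of_tendsto hlim hev
  linarith [this]

lemma down {lam : ℝ}
    (hflat : ∀ m : ℕ, Tendsto (fun ε : ℝ => iteratedDeriv m (Gfun lam) (ε:ℂ)) (𝓝[>] (0:ℝ)) (𝓝 0))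
    {r' : ℝ} (hr' : 0 < r') :
    ∀ (k m : ℕ) (A : ℝ), 0 ≤ A →
      (∀ u ∈ Set.Ioo (0:ℝ) r', ‖iteratedDeriv (m+k) (Gfun lam) (u:ℂ)‖ ≤ A) →
      ∀ t ∈ Set.Ioo (0:ℝ) r', ‖iteratedDeriv m (Gfun lam) (t:ℂ)‖ ≤ A * t^k / (k.factorial) := by
  intro k
  induction k with
  | zero =>
    intro m A hA h t ht
    simpa using h t ht
  | succ k ih =>
    intro m A hA h t ht
    have hb := ih (m+1) A hA (fun u hu => by
      have : m + 1 + k = m + (k+1) := by ring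
      rw [this]
      exact h u hu)
    have hb' : ∀ u ∈ Set.Ioo (0:ℝ) r',
        ‖iteratedDeriv (m+1) (Gfun lam) (u:ℂ)‖ ≤ (A / k.factorial) * u^k := by
      intro u hu
      exact le_trans (hb u hu) (le_of_eq (by ring))
    have hstep := step hr' (by positivity : (0:ℝ) ≤ A / k.factorial) (hflat m) hb' t ht
    refine hstep.trans_eq ?_
    have hfs : (((k+1 : ℕ)).factorial : ℝ) = ((k:ℝ)+1) * (k.factorial : ℝ) := by
      rw [Nat.factorial_succ]; push_cast; ring
    rw [hfs, div_mul_eq_mul_div, div_div, mul_comm ((k:ℝ)+1) (k.factorial : ℝ)]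

/-- Counter-example in the ultraholomorphic case without moderate growth:
for small sectors, `G_λ` is a flat element of `A_{M^λ}(S_{γ,r})` not belonging
to `A_{M^μ}(S_{γ,r})` for any `μ < λ`; moreover `G_{2λ}² = G_λ`, so `G_{2λ}`
is a smooth root of `w² − G_λ(z)` escaping the class of the coefficients. -/
theorem Gfun_counterexample (lam : ℝ) (hlam : 0 < lam) :
    (∀ z : ℂ, Gfun (2 * lam) z ^ 2 = Gfun lam z) ∧
    ∃ γ₀ > (0:ℝ), ∀ γ : ℝ, 0 < γ → γ ≤ γ₀ → ∀ r : ℝ≥0∞, 0 < r → r ≤ 1 →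
      AClass (Mlam lam) γ r (Gfun lam) ∧
      FlatOn γ r (Gfun lam) ∧
      ∀ μ : ℝ, 0 < μ → μ < lam → ¬ AClass (Mlam μ) γ r (Gfun lam) := by
  constructor
  · intro z
    have hl : (lam:ℂ) ≠ 0 := by exact_mod_cast hlam.ne'
    rw [Gfun, Gfun, sq, ← Complex.exp_add]
    congr 1
    push_cast
    field_simp
    ring
  · refine ⟨1/2, by norm_num, ?_⟩
    intro γ hγ hγ2 r hr hr1
    have hflat : FlatOn γ r (Gfun lam) := fun j => flat_aux hlam hγ2 hr1 j
    have hdiffS : DifferentiableOn ℂ (Gfun lam) (Sector γ r) :=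
      (diffG lam).mono (sector_subset_slitPlane hγ2 hr1)
    refine ⟨⟨⟨hdiffS, ?_⟩, ?_⟩, hflat, ?_⟩
    · intro j
      refine ⟨(Real.exp (Real.pi^2/(4*lam)) * Real.exp ((Real.log 2)^2/lam)) * 4 ^ j *
        (j.factorial : ℝ) * Mlam lam j, ?_⟩
      intro z hz
      obtain ⟨h0, h1, h2⟩ := sector_facts hγ2 hr1 hz
      exact master2 hlam j h0 h1 h2
    · refine ⟨Real.exp (Real.pi^2/(4*lam)) * Real.exp ((Real.log 2)^2/lam), by positivity,
        4, by norm_num, ?_⟩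
      intro j z hz
      obtain ⟨h0, h1, h2⟩ := sector_facts hγ2 hr1 hz
      exact master2 hlam j h0 h1 h2
    · intro μ hμ hμlam hA
      obtain ⟨_, C, hC, σ, hσ, hbnd⟩ := hA
      set r' : ℝ := r.toReal with hr'_def
      have hrtop : r ≠ ⊤ := ne_top_of_le_ne_top (by simp) hr1
      have hr'0 : 0 < r' := ENNReal.toReal_pos hr.ne' hrtop
      have hmem : ∀ t ∈ Set.Ioo (0:ℝ) r', (t:ℂ) ∈ Sector γ r := by
        intro t ht
        refine ⟨by exact_mod_cast ht.1.ne', ?_, ?_⟩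
        · rw [Complex.arg_ofReal_of_nonneg ht.1.le]
          simpa using (by positivity : (0:ℝ) < γ * Real.pi / 2)
        · rw [← enorm_eq_nnnorm, ← ofReal_norm, Complex.norm_real,
            Real.norm_of_nonneg ht.1.le]
          exact (ENNReal.ofReal_lt_iff_lt_toReal ht.1.le hrtop).mpr ht.2
      have hflatR : ∀ m : ℕ, Tendsto (fun ε : ℝ => iteratedDeriv m (Gfun lam) (ε:ℂ))
          (𝓝[>] (0:ℝ)) (𝓝 0) := by
        intro m
        apply (hflat m).comp
        rw [tendsto_nhdsWithin_iff]
        constructor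
        · have h : Tendsto (fun ε : ℝ => (ε:ℂ)) (𝓝 (0:ℝ)) (𝓝 (0:ℂ)) := by
            simpa using Complex.continuous_ofReal.tendsto 0
          exact h.mono_left nhdsWithin_le_nhds
        · have h : Set.Ioo (0:ℝ) r' ∈ 𝓝[>] (0:ℝ) := Ioo_mem_nhdsGT_of_mem ⟨le_rfl, hr'0⟩
          exact Filter.eventually_of_mem h fun ε hε => hmem ε hε
      have key : ∀ (j : ℕ), ∀ t ∈ Set.Ioo (0:ℝ) r',
          -(Real.log t)^2/lam ≤ Real.log C + j * Real.log (σ*t) + μ*(j:ℝ)^2/4 := by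
        intro j t ht
        have hAnn : (0:ℝ) ≤ C * σ^j * (j.factorial:ℝ) * Mlam μ j := by
          have : (0:ℝ) < Mlam μ j := Real.exp_pos _
          positivity
        have hbd : ∀ u ∈ Set.Ioo (0:ℝ) r',
            ‖iteratedDeriv (0+j) (Gfun lam) (u:ℂ)‖ ≤ C * σ^j * (j.factorial:ℝ) * Mlam μ j := by
          intro u hu
          rw [zero_add]
          exact hbnd j u (hmem u hu)
        have hd := down hflatR hr'0 j 0 _ hAnn hbd t ht
        rw [iteratedDeriv_zero] at hd
        have hnorm : ‖Gfun lam ((t:ℝ):ℂ)‖ = Real.exp (-(Real.log t)^2/lam) := by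
          rw [norm_Gfun, Complex.arg_ofReal_of_nonneg ht.1.le, Complex.norm_real,
            Real.norm_of_nonneg ht.1.le]
          norm_num
        rw [hnorm] at hd
        have hst : 0 < σ * t := mul_pos hσ ht.1
        have hrhs : C * σ^j * (j.factorial:ℝ) * Mlam μ j * t^j / (j.factorial:ℝ)
            = Real.exp (Real.log C + j * Real.log (σ*t) + μ*(j:ℝ)^2/4) := by
          rw [Real.exp_add, Real.exp_add, Real.exp_log hC, Real.exp_nat_mul,
            Real.exp_log hst]
          have hMl : Mlam μ j = Real.exp (μ*(j:ℝ)^2/4) := rfl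
          rw [hMl, mul_pow]
          have hjf : (j.factorial:ℝ) ≠ 0 := by positivity
          field_simp
        rw [hrhs] at hd
        exact Real.exp_le_exp.mp hd
      set ε0 : ℝ := μ/4 - μ^2/(4*lam) with hε0
      have hε0pos : 0 < ε0 := by
        rw [hε0, sub_pos]
        rw [div_lt_div_iff₀ (by positivity) (by norm_num)]
        nlinarith
      have hF : Tendsto (fun j : ℕ => μ*(j:ℝ)^2/4 - (Real.log σ + μ*(j:ℝ)/2)^2/lam)
          atTop atTop := by
        have heq : (fun x : ℝ => μ*x^2/4 - (Real.log σ + μ*x/2)^2/lam)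
            = fun x => x * (ε0 * x - μ*Real.log σ/lam) - (Real.log σ)^2/lam := by
          funext x
          rw [hε0]
          field_simp
          ring
        have h1 : Tendsto (fun x : ℝ => x * (ε0 * x - μ*Real.log σ/lam)) atTop atTop := by
          apply Filter.Tendsto.atTop_mul_atTop₀ tendsto_id
          have h2 : Tendsto (fun x:ℝ => ε0 * x) atTop atTop :=
            Filter.Tendsto.const_mul_atTop hε0pos tendsto_id
          simpa [sub_eq_add_neg] using
            Filter.tendsto_atTop_add_const_right atTop (-(μ*Real.log σ/lam)) h2
        have h3 : Tendsto (fun x : ℝ => x * (ε0*x - μ*Real.log σ/lam) - (Real.log σ)^2/lam)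
            atTop atTop := by
          simpa [sub_eq_add_neg] using
            Filter.tendsto_atTop_add_const_right atTop (-((Real.log σ)^2/lam)) h1
        have h4 := h3.comp (tendsto_natCast_atTop_atTop (R := ℝ))
        rw [← heq] at h4
        exact h4
      have htj : Tendsto (fun j : ℕ => σ⁻¹ * Real.exp (-(μ*(j:ℝ)/2))) atTop (𝓝 0) := by
        have h1 : Tendsto (fun j : ℕ => -(μ*(j:ℝ)/2)) atTop atBot := by
          have heq2 : (fun j : ℕ => -(μ*(j:ℝ)/2)) = fun j : ℕ => (j:ℝ) * (-(μ/2)) := by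
            funext j; ring
          rw [heq2]
          exact Filter.Tendsto.atTop_mul_const_of_neg (by linarith)
            (tendsto_natCast_atTop_atTop (R := ℝ))
        have h2 := (Real.tendsto_exp_atBot.comp h1).const_mul σ⁻¹
        simpa using h2
      have hev1 := hF.eventually_gt_atTop (Real.log C)
      have hev2 := htj.eventually (gt_mem_nhds hr'0)
      obtain ⟨j, hj1, hj2⟩ := (hev1.and hev2).exists
      set t : ℝ := σ⁻¹ * Real.exp (-(μ*(j:ℝ)/2)) with ht_def
      have htpos : 0 < t := by positivity
      have hkey := key j t ⟨htpos, hj2⟩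
      have hlogt : Real.log t = -Real.log σ - μ*(j:ℝ)/2 := by
        rw [ht_def, Real.log_mul (by positivity) (Real.exp_ne_zero _), Real.log_inv,
          Real.log_exp]
        ring
      have hlogσt : Real.log (σ * t) = -(μ*(j:ℝ)/2) := by
        rw [ht_def, ← mul_assoc, mul_inv_cancel₀ hσ.ne', one_mul, Real.log_exp]
      rw [hlogt, hlogσt] at hkey
      have hsq : (-Real.log σ - μ*(j:ℝ)/2)^2 = (Real.log σ + μ*(j:ℝ)/2)^2 := by ring
      rw [hsq] at hkey
      have hj' : (j:ℝ) * (-(μ*(j:ℝ)/2)) = -(μ*(j:ℝ)^2/2) := by ring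
      rw [hj'] at hkey
      have hdiv : -(Real.log σ + μ*(j:ℝ)/2)^2/lam = -((Real.log σ + μ*(j:ℝ)/2)^2/lam) := by
        ring
      rw [hdiv] at hkey
      linarith
end
end
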